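/- arXiv:2211.00836 — 5 statements merged into one kernel-verified Lean document; each statement's English description precedes it below -/
import Mathlib

section
/- Fix constants α > 0, γ > 0, β ≥ 0 and n ≥ 1. Let ξ ∈ ℝⁿ with ξ ≠ 0 and λ₊(ξ) ≠ λ₋(ξ), and let a ∈ ℂ, b ∈ ℂⁿ. Define for t ≥ 0: ρ̂(t) := ((λ₊e^{λ₋t} − λ₋e^{λ₊t})/(λ₊−λ₋))a − iγ((e^{λ₊t} − e^{λ₋t})/(λ₊−λ₋))ξ·b and v̂(t) := e^{−α|ξ|²t}b − iγ((e^{λ₊t} − e^{λ₋t})/(λ₊−λ₋))ξa + (((λ₊e^{λ₊t} − λ₋e^{λ₋t})/(λ₊−λ₋)) − e^{−α|ξ|²t})ξ(ξ·b)/|ξ|². Then ρ̂(0) = a, v̂(0) = b, and for all t > 0: dρ̂/dt(t) + iγ ξ·v̂(t) = 0 and dv̂/dt(t) + α|ξ|²v̂(t) + βξ(ξ·v̂(t)) + iγξρ̂(t) = 0. -/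
open MeasureTheory Filter
open scoped ENNReal Topology

noncomputable section

/-- Fourier transform with the convention `f̂(ξ) = ∫ e^{-i x·ξ} f(x) dx`. -/
def FT {n : ℕ} (f : EuclideanSpace ℝ (Fin n) → ℂ) (ξ : EuclideanSpace ℝ (Fin n)) : ℂ :=
  ∫ x : EuclideanSpace ℝ (Fin n),
    Complex.exp (-Complex.I * Complex.ofReal (∑ k, x k * ξ k)) * f x

/-- The time-dependent function `D_n(t)`. -/
def Dfun (n : ℕ) (t : ℝ) : ℝ :=
  if n = 1 then Real.sqrt t
  else if n = 2 then Real.sqrt (Real.log t)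
  else t ^ ((1 : ℝ)/2 - (n : ℝ)/4)

/-- The root `λ₊` of `λ² + (α+β)r²λ + γ²r² = 0` (principal complex square root). -/
def lamP (α β γ r : ℝ) : ℂ :=
  Complex.ofReal (-((α+β)/2 * r^2))
    + Complex.ofReal ((α+β)/2) * (Complex.ofReal (r^4 - 4*γ^2/(α+β)^2 * r^2)) ^ ((1 : ℂ)/2)

/-- The root `λ₋` of `λ² + (α+β)r²λ + γ²r² = 0` (principal complex square root). -/
def lamM (α β γ r : ℝ) : ℂ :=
  Complex.ofReal (-((α+β)/2 * r^2))
    - Complex.ofReal ((α+β)/2) * (Complex.ofReal (r^4 - 4*γ^2/(α+β)^2 * r^2)) ^ ((1 : ℂ)/2)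

/-- Fourier-space density of the linearized compressible Navier–Stokes system with data (a, b). -/
def rhoHat (α β γ : ℝ) {n : ℕ} (a : ℂ) (b : EuclideanSpace ℂ (Fin n))
    (ξ : EuclideanSpace ℝ (Fin n)) (t : ℝ) : ℂ :=
  ((lamP α β γ ‖ξ‖ * Complex.exp (lamM α β γ ‖ξ‖ * (t : ℂ))
      - lamM α β γ ‖ξ‖ * Complex.exp (lamP α β γ ‖ξ‖ * (t : ℂ)))
    / (lamP α β γ ‖ξ‖ - lamM α β γ ‖ξ‖)) * a
  - Complex.I * (γ : ℂ) * ((Complex.exp (lamP α β γ ‖ξ‖ * (t : ℂ))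
      - Complex.exp (lamM α β γ ‖ξ‖ * (t : ℂ)))
    / (lamP α β γ ‖ξ‖ - lamM α β γ ‖ξ‖)) * (∑ k, (ξ k : ℂ) * b k)

/-- Fourier-space velocity of the linearized compressible Navier–Stokes system with data (a, b). -/
def vHat (α β γ : ℝ) {n : ℕ} (a : ℂ) (b : EuclideanSpace ℂ (Fin n))
    (ξ : EuclideanSpace ℝ (Fin n)) (t : ℝ) : EuclideanSpace ℂ (Fin n) :=
  (WithLp.equiv 2 (Fin n → ℂ)).symm fun j =>
    Complex.exp (Complex.ofReal (-(α * ‖ξ‖^2 * t))) * b j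
    - Complex.I * (γ : ℂ) * ((Complex.exp (lamP α β γ ‖ξ‖ * (t : ℂ))
        - Complex.exp (lamM α β γ ‖ξ‖ * (t : ℂ)))
      / (lamP α β γ ‖ξ‖ - lamM α β γ ‖ξ‖)) * (ξ j : ℂ) * a
    + (((lamP α β γ ‖ξ‖ * Complex.exp (lamP α β γ ‖ξ‖ * (t : ℂ))
          - lamM α β γ ‖ξ‖ * Complex.exp (lamM α β γ ‖ξ‖ * (t : ℂ)))
        / (lamP α β γ ‖ξ‖ - lamM α β γ ‖ξ‖)) - Complex.exp (Complex.ofReal (-(α * ‖ξ‖^2 * t))))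
      * (ξ j : ℂ) * (∑ k, (ξ k : ℂ) * b k) / Complex.ofReal (‖ξ‖^2)

/-- The multiplier `Ĵ₀(t,ξ)` (radial, real-valued), as a function of `r = |ξ|`. -/
def J0hat (α β γ t r : ℝ) : ℝ :=
  r⁻¹ * (Real.cos (γ*r*t) - 1) * Real.exp (-((α+β)/2 * r^2 * t))

/-- The `k`-th component of the multiplier `Ĵ₁(t,ξ)`. -/
def J1hat (α β γ : ℝ) {n : ℕ} (t : ℝ) (ξ : EuclideanSpace ℝ (Fin n)) (k : Fin n) : ℂ :=
  -Complex.I * Complex.ofReal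
    (‖ξ‖⁻¹ * Real.sin (γ*‖ξ‖*t) * Real.exp (-((α+β)/2 * ‖ξ‖^2 * t)) * (ξ k / ‖ξ‖))

/-- The multiplier `Ĵ₂(t,ξ)` (radial, real-valued), as a function of `r = |ξ|`. -/
def J2hat (α β γ t r : ℝ) : ℝ :=
  r⁻¹ * (Real.cos (γ*r*t) * Real.exp (-((α+β)/2 * r^2 * t)) - Real.exp (-(α * r^2 * t)))

/-- Real part of the characteristic roots in the small-frequency regime. -/
def lamR (α β r : ℝ) : ℝ := -((α+β)/2 * r^2)

/-- Imaginary part of the characteristic root `λ₊` in the small-frequency regime. -/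
def lamI (α β γ r : ℝ) : ℝ := r * Real.sqrt (γ^2 - (α+β)^2/4 * r^2)

/-- The multiplier `K̂₀(t,ξ)` (radial, real-valued), as a function of `r = |ξ|`. -/
def K0hat (α β γ t r : ℝ) : ℝ :=
  r⁻¹ * Real.cos (lamI α β γ r * t) * Real.exp (lamR α β r * t)
  - r⁻¹ * Real.exp (-((α+β)/2 * r^2 * t))
  - (lamR α β r / (lamI α β γ r * r)) * Real.sin (lamI α β γ r * t) * Real.exp (lamR α β r * t)

/-- The `k`-th component of the multiplier `K̂₁(t,ξ)`. -/
def K1hat (α β γ : ℝ) {n : ℕ} (t : ℝ) (ξ : EuclideanSpace ℝ (Fin n)) (k : Fin n) : ℂ :=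
  -Complex.I * (γ : ℂ) * Complex.ofReal
    ((Real.sin (lamI α β γ ‖ξ‖ * t) / lamI α β γ ‖ξ‖) * Real.exp (lamR α β ‖ξ‖ * t) * (ξ k / ‖ξ‖))

/-- The multiplier `K̂₂(t,ξ)` (radial, real-valued), as a function of `r = |ξ|`. -/
def K2hat (α β γ t r : ℝ) : ℝ :=
  r⁻¹ * Real.cos (lamI α β γ r * t) * Real.exp (lamR α β r * t)
  - r⁻¹ * Real.exp (-(α * r^2 * t))
  + (lamR α β r / (lamI α β γ r * r)) * Real.sin (lamI α β γ r * t) * Real.exp (lamR α β r * t)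

/-- Weighted `L^{1,s}` norm `∫ (1+|x|)^s |f(x)| dx`. -/
def wnorm {n : ℕ} (s : ℝ) (f : EuclideanSpace ℝ (Fin n) → ℝ) : ℝ :=
  ∫ x : EuclideanSpace ℝ (Fin n), (1 + ‖x‖)^s * |f x|

/-- Zeroth moment `P_f = ∫ f`. -/
def Pint {n : ℕ} (f : EuclideanSpace ℝ (Fin n) → ℝ) : ℝ :=
  ∫ x : EuclideanSpace ℝ (Fin n), f x

/-- `j`-th component of the first moment `Q_f = ∫ x f(x) dx`. -/
def Qmom {n : ℕ} (f : EuclideanSpace ℝ (Fin n) → ℝ) (j : Fin n) : ℝ :=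
  ∫ x : EuclideanSpace ℝ (Fin n), x j * f x



private lemma half_pow' (z : ℂ) : z ^ ((1:ℂ)/2) * z ^ ((1:ℂ)/2) = z := by
  rcases eq_or_ne z 0 with h|h
  · simp [h, Complex.zero_cpow (by norm_num : (1:ℂ)/2 ≠ 0)]
  · rw [← Complex.cpow_add _ _ h]; norm_num

private lemma expDeriv' (c : ℂ) (t : ℝ) :
    HasDerivAt (fun s : ℝ => Complex.exp (c * s)) (c * Complex.exp (c * t)) t := by
  have h1 : HasDerivAt (fun z : ℂ => Complex.exp (c * z)) (c * Complex.exp (c * t)) (t:ℂ) := by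
    simpa [mul_comm, Function.comp_def] using (Complex.hasDerivAt_exp (c * t)).comp (t:ℂ)
      ((hasDerivAt_id (t:ℂ)).const_mul c)
  exact h1.comp_ofReal

private lemma lam_sum' (α β γ r : ℝ) :
    lamP α β γ r + lamM α β γ r = -((α:ℂ)+(β:ℂ)) * (r:ℂ)^2 := by
  simp only [lamP, lamM]; push_cast; ring

private lemma lam_prod' (α β γ r : ℝ) (hab : α + β ≠ 0) :
    lamP α β γ r * lamM α β γ r = (γ:ℂ)^2 * (r:ℂ)^2 := by
  simp only [lamP, lamM]
  have hw := half_pow' ((Complex.ofReal (r^4 - 4*γ^2/(α+β)^2 * r^2)))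
  have hreal : ((α+β)/2*r^2) * ((α+β)/2*r^2)
      - ((α+β)/2)*((α+β)/2)*(r^4 - 4*γ^2/(α+β)^2*r^2) = γ^2*r^2 := by
    field_simp; ring
  calc (Complex.ofReal (-((α+β)/2 * r^2))
        + Complex.ofReal ((α+β)/2) * (Complex.ofReal (r^4 - 4*γ^2/(α+β)^2 * r^2)) ^ ((1 : ℂ)/2))
      * (Complex.ofReal (-((α+β)/2 * r^2))
        - Complex.ofReal ((α+β)/2) * (Complex.ofReal (r^4 - 4*γ^2/(α+β)^2 * r^2)) ^ ((1 : ℂ)/2))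
      = Complex.ofReal ((α+β)/2*r^2) * Complex.ofReal ((α+β)/2*r^2)
        - Complex.ofReal ((α+β)/2) * Complex.ofReal ((α+β)/2)
          * ((Complex.ofReal (r^4 - 4*γ^2/(α+β)^2 * r^2)) ^ ((1 : ℂ)/2)
            * (Complex.ofReal (r^4 - 4*γ^2/(α+β)^2 * r^2)) ^ ((1 : ℂ)/2)) := by push_cast; ring
    _ = Complex.ofReal (γ^2 * r^2) := by
        rw [hw, ← Complex.ofReal_mul, ← Complex.ofReal_mul, ← Complex.ofReal_mul,
          ← Complex.ofReal_sub, hreal]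
    _ = (γ:ℂ)^2 * (r:ℂ)^2 := by push_cast; ring

private lemma sum_split' {n : ℕ} (x : Fin n → ℝ) (b : Fin n → ℂ) (A B C S R : ℂ) (a : ℂ) :
    (∑ k, (x k:ℂ) * (A * b k - B * (x k:ℂ) * a + C * (x k:ℂ) * S / R))
      = A * (∑ k, (x k:ℂ) * b k) + (C*S/R - B*a) * (∑ k, (x k:ℂ) * (x k:ℂ)) := by
  rw [Finset.mul_sum, Finset.mul_sum, ← Finset.sum_add_distrib]
  exact Finset.sum_congr rfl fun k _ => by ring

/-- The Fourier-space formulas solve the Fourier-transformed linearized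
compressible Navier–Stokes ODE system with initial data `(a, b)`. -/
theorem fourier_solution_solves_system
    (α β γ : ℝ) (hα : 0 < α) (hβ : 0 ≤ β) (hγ : 0 < γ)
    {n : ℕ} (hn : 1 ≤ n) (ξ : EuclideanSpace ℝ (Fin n)) (hξ : ξ ≠ 0)
    (hlam : lamP α β γ ‖ξ‖ ≠ lamM α β γ ‖ξ‖)
    (a : ℂ) (b : EuclideanSpace ℂ (Fin n)) :
    rhoHat α β γ a b ξ 0 = a ∧ vHat α β γ a b ξ 0 = b
    ∧ (∀ t : ℝ, 0 < t → HasDerivAt (fun s => rhoHat α β γ a b ξ s)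
        (-(Complex.I * (γ : ℂ) * ∑ k, (ξ k : ℂ) * vHat α β γ a b ξ t k)) t)
    ∧ (∀ t : ℝ, 0 < t → ∀ j, HasDerivAt (fun s => vHat α β γ a b ξ s j)
        (-(Complex.ofReal (α * ‖ξ‖^2) * vHat α β γ a b ξ t j
           + (β : ℂ) * (ξ j : ℂ) * ∑ k, (ξ k : ℂ) * vHat α β γ a b ξ t k
           + Complex.I * (γ : ℂ) * (ξ j : ℂ) * rhoHat α β γ a b ξ t)) t) := by

  have hab : α + β ≠ 0 := by positivity
  have hr : ‖ξ‖ ≠ 0 := norm_ne_zero_iff.mpr hξ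
  have hcr : (‖ξ‖:ℂ) ≠ 0 := Complex.ofReal_ne_zero.mpr hr
  set P := lamP α β γ ‖ξ‖ with hPdef
  set M := lamM α β γ ‖ξ‖ with hMdef
  set S := ∑ k, (ξ k:ℂ) * b k with hSdef
  have hsum : P + M = -((α:ℂ)+(β:ℂ)) * (‖ξ‖:ℂ)^2 := lam_sum' α β γ ‖ξ‖
  have hprod : P * M = (γ:ℂ)^2 * (‖ξ‖:ℂ)^2 := lam_prod' α β γ ‖ξ‖ hab
  have hD : P - M ≠ 0 := sub_ne_zero.mpr hlam
  have hR2 : Complex.ofReal (‖ξ‖^2) = (‖ξ‖:ℂ)^2 := by push_cast; ring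
  have hR : Complex.ofReal (‖ξ‖^2) ≠ 0 := by
    rw [hR2]; exact pow_ne_zero 2 (Complex.ofReal_ne_zero.mpr hr)
  have hxC : (∑ k, (ξ k:ℂ) * (ξ k:ℂ)) = Complex.ofReal (‖ξ‖^2) := by
    have h1 : ‖ξ‖^2 = ∑ k, (ξ k)^2 := by
      rw [EuclideanSpace.norm_eq, Real.sq_sqrt (by positivity)]
      simp [Real.norm_eq_abs, sq_abs]
    rw [h1]; push_cast [sq]; rfl
  have hc0e : ∀ s : ℝ, Complex.ofReal (-(α*‖ξ‖^2*s)) = Complex.ofReal (-(α*‖ξ‖^2)) * (s:ℂ) :=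
    fun s => by push_cast; ring
  have hv2L : Complex.ofReal (‖ξ‖^2) * (Complex.ofReal (‖ξ‖^2))⁻¹ = 1 := mul_inv_cancel₀ hR
  have hsum' : P + M = -((α:ℂ)+(β:ℂ)) * Complex.ofReal (‖ξ‖^2) := by rw [hR2]; exact hsum
  have hprod' : P * M = (γ:ℂ)^2 * Complex.ofReal (‖ξ‖^2) := by rw [hR2]; exact hprod
  have hsv : ∀ t : ℝ, (∑ k, (ξ k:ℂ) * vHat α β γ a b ξ t k)
      = Complex.exp (Complex.ofReal (-(α*‖ξ‖^2)) * (t:ℂ)) * S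
        + (((P * Complex.exp (P*(t:ℂ)) - M * Complex.exp (M*(t:ℂ)))/(P-M)
            - Complex.exp (Complex.ofReal (-(α*‖ξ‖^2)) * (t:ℂ))) * S / Complex.ofReal (‖ξ‖^2)
          - Complex.I * (γ:ℂ) * ((Complex.exp (P*(t:ℂ)) - Complex.exp (M*(t:ℂ)))/(P-M)) * a)
          * Complex.ofReal (‖ξ‖^2) := by
    intro t
    simp only [vHat, ← hPdef, ← hMdef, ← hSdef, WithLp.equiv_symm_apply, PiLp.toLp_apply, hc0e]
    rw [sum_split', hxC]
  refine ⟨?_, ?_, ?_, ?_⟩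
  · simp only [rhoHat, ← hPdef, ← hMdef, ← hSdef, Complex.ofReal_zero, mul_zero,
      Complex.exp_zero, mul_one]
    rw [sub_self, zero_div, div_self hD]; ring
  · ext j
    simp only [vHat, ← hPdef, ← hMdef, ← hSdef, WithLp.equiv_symm_apply, PiLp.toLp_apply, mul_zero,
      neg_zero, Complex.ofReal_zero, Complex.exp_zero, mul_one]
    rw [sub_self, zero_div, div_self hD]; ring
  · intro t ht
    have hEP := expDeriv' P t
    have hEM := expDeriv' M t
    have hder : HasDerivAt (fun s : ℝ => rhoHat α β γ a b ξ s)
        (((P * (M * Complex.exp (M*(t:ℂ))) - M * (P * Complex.exp (P*(t:ℂ))))/(P-M)) * a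
          - Complex.I * (γ:ℂ) * ((P * Complex.exp (P*(t:ℂ)) - M * Complex.exp (M*(t:ℂ)))/(P-M))
            * S) t := by
      simp only [rhoHat, ← hPdef, ← hMdef, ← hSdef]
      exact ((((hEM.const_mul P).sub (hEP.const_mul M)).div_const _).mul_const a).sub
        ((((hEP.sub hEM).div_const _).const_mul (Complex.I * (γ:ℂ))).mul_const S)
    convert hder using 1
    rw [hsv t]
    linear_combination
      ((γ:ℂ)^2 * Complex.ofReal (‖ξ‖^2) * a
          * ((Complex.exp (P*(t:ℂ)) - Complex.exp (M*(t:ℂ)))/(P-M))) * Complex.I_mul_I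
      + (-(Complex.I * (γ:ℂ) * S)
          * ((P * Complex.exp (P*(t:ℂ)) - M * Complex.exp (M*(t:ℂ)))/(P-M)
            - Complex.exp (Complex.ofReal (-(α*‖ξ‖^2)) * (t:ℂ)))) * hv2L
      + (a * ((Complex.exp (P*(t:ℂ)) - Complex.exp (M*(t:ℂ)))/(P-M))) * hprod'
  · intro t ht
    intro j
    have hEP := expDeriv' P t
    have hEM := expDeriv' M t
    have hE0 := expDeriv' (Complex.ofReal (-(α*‖ξ‖^2))) t
    have hder : HasDerivAt (fun s : ℝ => vHat α β γ a b ξ s j)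
        ((Complex.ofReal (-(α*‖ξ‖^2)) * Complex.exp (Complex.ofReal (-(α*‖ξ‖^2)) * (t:ℂ)))
            * b j
          - Complex.I * (γ:ℂ) * ((P * Complex.exp (P*(t:ℂ)) - M * Complex.exp (M*(t:ℂ)))/(P-M))
            * (ξ j:ℂ) * a
          + (((P * (P * Complex.exp (P*(t:ℂ))) - M * (M * Complex.exp (M*(t:ℂ))))/(P-M)
              - Complex.ofReal (-(α*‖ξ‖^2)) * Complex.exp (Complex.ofReal (-(α*‖ξ‖^2)) * (t:ℂ)))
            * (ξ j:ℂ) * S / Complex.ofReal (‖ξ‖^2))) t := by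
      simp only [vHat, ← hPdef, ← hMdef, ← hSdef, WithLp.equiv_symm_apply, PiLp.toLp_apply, hc0e]
      exact ((hE0.mul_const (b j)).sub
          (((((hEP.sub hEM).div_const _).const_mul (Complex.I * (γ:ℂ))).mul_const
            ((ξ j:ℂ))).mul_const a)).add
        (((((((hEP.const_mul P).sub (hEM.const_mul M)).div_const _).sub hE0).mul_const
          ((ξ j:ℂ))).mul_const S).div_const _)
    convert hder using 1
    rw [hsv t]
    have hvj : vHat α β γ a b ξ t j
        = Complex.exp (Complex.ofReal (-(α*‖ξ‖^2)) * (t:ℂ)) * b j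
          - Complex.I * (γ:ℂ) * ((Complex.exp (P*(t:ℂ)) - Complex.exp (M*(t:ℂ)))/(P-M))
            * (ξ j:ℂ) * a
          + (((P * Complex.exp (P*(t:ℂ)) - M * Complex.exp (M*(t:ℂ)))/(P-M)
              - Complex.exp (Complex.ofReal (-(α*‖ξ‖^2)) * (t:ℂ)))
            * (ξ j:ℂ) * S / Complex.ofReal (‖ξ‖^2)) := by
      simp only [vHat, ← hPdef, ← hMdef, ← hSdef, WithLp.equiv_symm_apply, PiLp.toLp_apply, hc0e]
    rw [hvj]
    simp only [rhoHat, ← hPdef, ← hMdef, ← hSdef]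
    rw [show Complex.ofReal (α*‖ξ‖^2) = (α:ℂ) * Complex.ofReal (‖ξ‖^2) from
      Complex.ofReal_mul _ _]
    rw [show Complex.ofReal (-(α*‖ξ‖^2)) = -((α:ℂ) * Complex.ofReal (‖ξ‖^2)) from by
      rw [Complex.ofReal_neg, Complex.ofReal_mul]]
    linear_combination
      (Complex.I * (γ:ℂ) * (ξ j:ℂ) * a
          * ((Complex.exp (P*(t:ℂ)) - Complex.exp (M*(t:ℂ)))/(P-M))
        - (ξ j:ℂ) * S * ((P * Complex.exp (P*(t:ℂ)) - M * Complex.exp (M*(t:ℂ)))/(P-M))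
            / Complex.ofReal (‖ξ‖^2)) * hsum'
      + ((ξ j:ℂ) * S * ((Complex.exp (P*(t:ℂ)) - Complex.exp (M*(t:ℂ)))/(P-M))
            / Complex.ofReal (‖ξ‖^2)) * hprod'
      + ((γ:ℂ)^2 * ((Complex.exp (P*(t:ℂ)) - Complex.exp (M*(t:ℂ)))/(P-M)) * (ξ j:ℂ) * S)
          * Complex.I_mul_I
      + ((ξ j:ℂ) * S * ((γ:ℂ)^2 * ((Complex.exp (P*(t:ℂ)) - Complex.exp (M*(t:ℂ)))/(P-M))
          + (β:ℂ) * Complex.exp (-((α:ℂ) * Complex.ofReal (‖ξ‖^2)) * (t:ℂ)))) * hv2L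


end
end

section
/- Fix constants α > 0, γ > 0, β ≥ 0. For any 0 < ε₀ ≤ N₀ < ∞ there exist c > 0 and C > 0 such that for every ξ ∈ ℝⁿ with ε₀ ≤ |ξ| ≤ N₀ and λ₊(ξ) ≠ λ₋(ξ), every a ∈ ℂ, b ∈ ℂⁿ, and every t ≥ 1: |ρ̂(t,ξ) − e^{−((α+β)/2)|ξ|²t}a| + |v̂(t,ξ) − e^{−α|ξ|²t}b| ≤ C e^{−ct}(|a| + |b|), where ρ̂ and v̂ are the Fourier-space solution with data (a,b). -/
open MeasureTheory Filter
open scoped ENNReal Topology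

noncomputable section

/-! ### Auxiliary lemmas for `exponential_decay_annulus` -/

lemma aux_cpow_half_sq (d : ℝ) : ((d:ℂ) ^ ((1:ℂ)/2))^2 = (d:ℂ) := by
  by_cases hd : (d:ℂ) = 0
  · rw [hd, Complex.zero_cpow (by norm_num)]; simp
  · rw [sq, ← Complex.cpow_add _ _ hd]; norm_num

lemma aux_re_cpow_half_of_nonpos {d : ℝ} (hd : d ≤ 0) : ((d:ℂ) ^ ((1:ℂ)/2)).re = 0 := by
  set w := (d:ℂ)^((1:ℂ)/2) with hw
  have hsq : w^2 = (d:ℂ) := aux_cpow_half_sq d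
  have him : (w^2).im = 0 := by rw [hsq]; simp
  have hre : (w^2).re = d := by rw [hsq]; simp
  rw [sq, Complex.mul_im] at him
  rw [sq, Complex.mul_re] at hre
  by_contra h
  have hm : w.re * w.im = 0 := by linarith
  rcases mul_eq_zero.mp hm with h0 | h0
  · exact h h0
  · rw [h0] at hre
    nlinarith [mul_self_pos.mpr h]

lemma aux_cpow_half_of_nonneg {d : ℝ} (hd : 0 ≤ d) :
    (d:ℂ) ^ ((1:ℂ)/2) = (Real.sqrt d : ℂ) := by
  rw [show ((1:ℂ)/2) = ((1/2 : ℝ) : ℂ) by norm_num, ← Complex.ofReal_cpow hd,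
    ← Real.sqrt_eq_rpow]

lemma aux_norm_cpow_half (d : ℝ) : ‖(d:ℂ) ^ ((1:ℂ)/2)‖ = Real.sqrt |d| := by
  have h : ‖(d:ℂ)^((1:ℂ)/2)‖^2 = |d| := by
    rw [← norm_pow, aux_cpow_half_sq]; simp [Complex.norm_real]
  rw [← h, Real.sqrt_sq (norm_nonneg _)]

lemma aux_exp_div_diff_bound (z w : ℂ) (hzw : z ≠ w) {t m : ℝ} (ht : 0 ≤ t)
    (hz : z.re ≤ -m) (hw : w.re ≤ -m) :
    ‖(Complex.exp (z*t) - Complex.exp (w*t)) / (z - w)‖ ≤ t * Real.exp (-(m*t)) := by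
  have hne : z - w ≠ 0 := sub_ne_zero.mpr hzw
  have hpos : (0:ℝ) < ‖z - w‖ := norm_pos_iff.mpr hne
  rw [norm_div, div_le_iff₀ hpos]
  set f : ℝ → ℂ := fun s => Complex.exp ((w + (s:ℂ) * (z - w)) * t) with hf
  have hderiv : ∀ s ∈ Set.Icc (0:ℝ) 1,
      HasDerivWithinAt f ((z - w) * t * Complex.exp ((w + (s:ℂ) * (z - w)) * t))
        (Set.Icc (0:ℝ) 1) s := by
    intro s _
    have h1 : HasDerivAt (fun s : ℝ => ((s:ℂ))) 1 s := by
      simpa using (hasDerivAt_id s).ofReal_comp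
    have h2 : HasDerivAt (fun s : ℝ => (w + (s:ℂ) * (z - w)) * t) ((z - w) * t) s := by
      simpa using (((h1.mul_const (z - w)).const_add w).mul_const (t:ℂ))
    exact (h2.cexp.congr_deriv (by ring)).hasDerivWithinAt
  have hbound : ∀ s ∈ Set.Icc (0:ℝ) 1,
      ‖(z - w) * t * Complex.exp ((w + (s:ℂ) * (z - w)) * t)‖
        ≤ ‖z - w‖ * t * Real.exp (-(m*t)) := by
    intro s hs
    simp only [norm_mul, Complex.norm_exp]
    have hre : ((w + (s:ℂ) * (z - w)) * t).re ≤ -(m * t) := by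
      have : ((w + (s:ℂ) * (z - w)) * t).re = (w.re + s * (z.re - w.re)) * t := by
        simp [Complex.add_re, Complex.mul_re, Complex.ofReal_re, Complex.ofReal_im,
          Complex.sub_re, Complex.sub_im]
        try ring
      rw [this]
      have h1 : w.re + s * (z.re - w.re) ≤ -m := by nlinarith [hs.1, hs.2]
      nlinarith
    rw [Complex.norm_real, Real.norm_eq_abs, abs_of_nonneg ht]
    have hexp : Real.exp (((w + (s:ℂ) * (z - w)) * t).re) ≤ Real.exp (-(m*t)) :=
      Real.exp_le_exp.mpr hre
    have h0 : (0:ℝ) ≤ ‖z - w‖ * t :=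
      mul_nonneg (norm_nonneg _) ht
    calc ‖z - w‖ * t * Real.exp (((w + (s:ℂ) * (z - w)) * t).re)
        ≤ ‖z - w‖ * t * Real.exp (-(m*t)) :=
          mul_le_mul_of_nonneg_left hexp h0
      _ = ‖z - w‖ * t * Real.exp (-(m*t)) := rfl
  have key := Convex.norm_image_sub_le_of_norm_hasDerivWithin_le hderiv hbound
    (convex_Icc 0 1) (Set.mem_Icc.mpr ⟨le_refl 0, zero_le_one⟩)
    (Set.mem_Icc.mpr ⟨zero_le_one, le_refl 1⟩)
  have hf1 : f 1 = Complex.exp (z * t) := by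
    simp only [hf, Complex.ofReal_one, one_mul]; ring_nf
  have hf0 : f 0 = Complex.exp (w * t) := by simp [hf]
  rw [hf1, hf0] at key
  simpa [mul_comm, mul_assoc, mul_left_comm] using key

lemma aux_re_lam_bound (α β γ : ℝ) (hα : 0 < α) (hβ : 0 ≤ β) (hγ : 0 < γ)
    {ε₀ r : ℝ} (hε : 0 < ε₀) (hr : ε₀ ≤ r) :
    (lamP α β γ r).re ≤ -(min ((α+β)/2*ε₀^2) (γ^2/(α+β))) ∧
      (lamM α β γ r).re ≤ -(min ((α+β)/2*ε₀^2) (γ^2/(α+β))) := by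
  have hA : 0 < α + β := by linarith
  have hσ : 0 < (α+β)/2 := by positivity
  have hrpos : 0 < r := lt_of_lt_of_le hε hr
  have hPre : (lamP α β γ r).re
      = -((α+β)/2*r^2)
        + (α+β)/2 * ((Complex.ofReal (r^4 - 4*γ^2/(α+β)^2 * r^2)) ^ ((1 : ℂ)/2)).re := by
    simp [lamP, Complex.add_re, Complex.mul_re, Complex.ofReal_re, Complex.ofReal_im,
      ← Complex.ofReal_pow]
  have hMre : (lamM α β γ r).re
      = -((α+β)/2*r^2)
        - (α+β)/2 * ((Complex.ofReal (r^4 - 4*γ^2/(α+β)^2 * r^2)) ^ ((1 : ℂ)/2)).re := by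
    simp [lamM, Complex.sub_re, Complex.mul_re, Complex.ofReal_re, Complex.ofReal_im,
      ← Complex.ofReal_pow]
  have hmin1 : min ((α+β)/2*ε₀^2) (γ^2/(α+β)) ≤ (α+β)/2*ε₀^2 := min_le_left _ _
  have hmin2 : min ((α+β)/2*ε₀^2) (γ^2/(α+β)) ≤ γ^2/(α+β) := min_le_right _ _
  have hεr2 : ε₀^2 ≤ r^2 := by nlinarith
  have hε2r : (α+β)/2*ε₀^2 ≤ (α+β)/2*r^2 := mul_le_mul_of_nonneg_left hεr2 hσ.le
  by_cases hcase : r^4 - 4*γ^2/(α+β)^2 * r^2 ≤ 0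
  · have h0 := aux_re_cpow_half_of_nonpos hcase
    constructor
    · rw [hPre, h0]; rw [mul_zero, add_zero]; linarith
    · rw [hMre, h0]; rw [mul_zero, sub_zero]; linarith
  · push_neg at hcase
    have hw := aux_cpow_half_of_nonneg hcase.le
    have hwre : ((Complex.ofReal (r^4 - 4*γ^2/(α+β)^2 * r^2)) ^ ((1 : ℂ)/2)).re
        = Real.sqrt (r^4 - 4*γ^2/(α+β)^2 * r^2) := by rw [hw]; simp
    set s := Real.sqrt (r^4 - 4*γ^2/(α+β)^2 * r^2) with hs
    clear_value s
    have hsnn : 0 ≤ s := hs ▸ Real.sqrt_nonneg _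
    have hsq : s * s = r^4 - 4*γ^2/(α+β)^2 * r^2 := hs ▸ Real.mul_self_sqrt hcase.le
    have hk : 0 < 4*γ^2/(α+β)^2 := by positivity
    have hsd : s ≤ r^2 := by
      have hd4 : r^4 - 4*γ^2/(α+β)^2 * r^2 ≤ (r^2)^2 := by nlinarith
      calc s ≤ Real.sqrt ((r^2)^2) := hs ▸ Real.sqrt_le_sqrt hd4
        _ = r^2 := Real.sqrt_sq (sq_nonneg r)
    constructor
    · rw [hPre, hwre]
      have h1 : (r^2 - s) * (r^2 + s) = 4*γ^2/(α+β)^2 * r^2 := by linear_combination -hsq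
      have h2 : 4*γ^2/(α+β)^2 * r^2 ≤ (r^2 - s) * (2*r^2) :=
        h1 ▸ mul_le_mul_of_nonneg_left (by linarith) (by linarith)
      have hr2 : 0 < r^2 := by positivity
      have h3 : 4*γ^2/(α+β)^2 ≤ 2*(r^2 - s) := by nlinarith [h2, hr2]
      have h5 : (α+β)/2 * (4*γ^2/(α+β)^2) ≤ (α+β)/2 * (2*(r^2-s)) :=
        mul_le_mul_of_nonneg_left h3 hσ.le
      have h4 : γ^2/(α+β) = (α+β)/2 * (4*γ^2/(α+β)^2) / 2 := by field_simp; ring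
      linarith [h5, h4, hmin2]
    · rw [hMre, hwre]
      linarith [mul_nonneg hσ.le hsnn, hmin1, hε2r]

lemma aux_norm_lam_bound (α β γ : ℝ) (hα : 0 < α) (hβ : 0 ≤ β)
    {N₀ r : ℝ} (h0 : 0 ≤ r) (hr : r ≤ N₀) :
    ‖lamP α β γ r‖ ≤ (α+β)/2*N₀^2 + (α+β)/2 * Real.sqrt (N₀^4 + 4*γ^2/(α+β)^2*N₀^2) ∧
    ‖lamM α β γ r‖ ≤ (α+β)/2*N₀^2 + (α+β)/2 * Real.sqrt (N₀^4 + 4*γ^2/(α+β)^2*N₀^2) := by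
  have hA : 0 < α + β := by linarith
  have hσ : 0 < (α+β)/2 := by positivity
  have hN0 : 0 ≤ N₀ := le_trans h0 hr
  have hk : 0 ≤ 4*γ^2/(α+β)^2 := by positivity
  have h1 : r^2 ≤ N₀^2 := by nlinarith
  have h2 : r^4 ≤ N₀^4 := by nlinarith
  have hwn : ‖((r^4 - 4*γ^2/(α+β)^2*r^2 : ℝ):ℂ) ^ ((1:ℂ)/2)‖
      ≤ Real.sqrt (N₀^4 + 4*γ^2/(α+β)^2*N₀^2) := by
    rw [aux_norm_cpow_half]
    apply Real.sqrt_le_sqrt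
    rw [abs_le]
    constructor <;> nlinarith [mul_le_mul_of_nonneg_left h1 hk, mul_nonneg hk (sq_nonneg r),
      mul_nonneg hk (sq_nonneg N₀)]
  have hre : ‖(Complex.ofReal (-((α+β)/2 * r^2)))‖ = (α+β)/2 * r^2 := by
    rw [Complex.norm_real, Real.norm_eq_abs, abs_neg, abs_of_nonneg (by positivity)]
  have hmw : ‖Complex.ofReal ((α+β)/2) * ((r^4 - 4*γ^2/(α+β)^2*r^2 : ℝ):ℂ) ^ ((1:ℂ)/2)‖
      ≤ (α+β)/2 * Real.sqrt (N₀^4 + 4*γ^2/(α+β)^2*N₀^2) := by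
    rw [norm_mul, Complex.norm_real, Real.norm_eq_abs, abs_of_nonneg hσ.le]
    exact mul_le_mul_of_nonneg_left hwn hσ.le
  constructor
  · refine le_trans (norm_add_le _ _) ?_
    rw [hre]
    have : (α+β)/2*r^2 ≤ (α+β)/2*N₀^2 := by nlinarith
    linarith [hmw]
  · refine le_trans (norm_sub_le _ _) ?_
    rw [hre]
    have : (α+β)/2*r^2 ≤ (α+β)/2*N₀^2 := by nlinarith
    linarith [hmw]

lemma aux_coord_norm_le {n : ℕ} {𝕜 : Type*} [RCLike 𝕜] (x : EuclideanSpace 𝕜 (Fin n))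
    (j : Fin n) : ‖x j‖ ≤ ‖x‖ := by
  rw [EuclideanSpace.norm_eq]
  have h : ‖x j‖^2 ≤ ∑ i, ‖x i‖^2 :=
    Finset.single_le_sum (fun i _ => sq_nonneg ‖x i‖) (Finset.mem_univ j)
  calc ‖x j‖ = Real.sqrt (‖x j‖^2) := (Real.sqrt_sq (norm_nonneg _)).symm
    _ ≤ _ := Real.sqrt_le_sqrt h

lemma aux_euclid_norm_le {n : ℕ} (x : EuclideanSpace ℂ (Fin n)) (G : ℝ) (hG : 0 ≤ G)
    (h : ∀ j, ‖x j‖ ≤ G) : ‖x‖ ≤ Real.sqrt n * G := by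
  rw [EuclideanSpace.norm_eq]
  calc Real.sqrt (∑ i, ‖x i‖^2) ≤ Real.sqrt (∑ _i : Fin n, G^2) := by
        apply Real.sqrt_le_sqrt
        apply Finset.sum_le_sum
        intro i _
        exact pow_le_pow_left₀ (norm_nonneg _) (h i) 2
    _ = Real.sqrt (n * G^2) := by
        rw [Finset.sum_const, Finset.card_univ, Fintype.card_fin, nsmul_eq_mul]
    _ = Real.sqrt n * G := by
        rw [Real.sqrt_mul (Nat.cast_nonneg n), Real.sqrt_sq hG]

lemma aux_Ab (P Q : ℂ) (hPQ : P ≠ Q) {t M e₁ : ℝ} (ht0 : 0 ≤ t) (he₁ : 0 < e₁)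
    (hPn : ‖P‖ ≤ M)
    (hexpP : ‖Complex.exp (P*(t:ℂ))‖ ≤ e₁)
    (hEb : ‖(Complex.exp (P*(t:ℂ)) - Complex.exp (Q*(t:ℂ))) / (P - Q)‖ ≤ t * e₁) :
    ‖(P * Complex.exp (Q*(t:ℂ)) - Q * Complex.exp (P*(t:ℂ))) / (P - Q)‖
      ≤ (1 + M*t) * e₁ := by
  have hD : P - Q ≠ 0 := sub_ne_zero.mpr hPQ
  have hAid : (P * Complex.exp (Q*(t:ℂ)) - Q * Complex.exp (P*(t:ℂ))) / (P - Q)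
      = Complex.exp (P*(t:ℂ))
        - P * ((Complex.exp (P*(t:ℂ)) - Complex.exp (Q*(t:ℂ))) / (P - Q)) := by
    field_simp
    ring
  rw [hAid]
  refine le_trans (norm_sub_le _ _) ?_
  rw [norm_mul]
  nlinarith [hexpP, hEb, hPn, norm_nonneg P,
    norm_nonneg ((Complex.exp (P*(t:ℂ)) - Complex.exp (Q*(t:ℂ))) / (P - Q))]

lemma aux_Bb (P Q : ℂ) (hPQ : P ≠ Q) {t M e₁ : ℝ} (ht0 : 0 ≤ t) (he₁ : 0 < e₁)
    (hQn : ‖Q‖ ≤ M)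
    (hexpP : ‖Complex.exp (P*(t:ℂ))‖ ≤ e₁)
    (hEb : ‖(Complex.exp (P*(t:ℂ)) - Complex.exp (Q*(t:ℂ))) / (P - Q)‖ ≤ t * e₁) :
    ‖(P * Complex.exp (P*(t:ℂ)) - Q * Complex.exp (Q*(t:ℂ))) / (P - Q)‖
      ≤ (1 + M*t) * e₁ := by
  have hD : P - Q ≠ 0 := sub_ne_zero.mpr hPQ
  have hBid : (P * Complex.exp (P*(t:ℂ)) - Q * Complex.exp (Q*(t:ℂ))) / (P - Q)
      = Complex.exp (P*(t:ℂ))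
        + Q * ((Complex.exp (P*(t:ℂ)) - Complex.exp (Q*(t:ℂ))) / (P - Q)) := by
    field_simp
    ring
  rw [hBid]
  refine le_trans (norm_add_le _ _) ?_
  rw [norm_mul]
  nlinarith [hexpP, hEb, hQn, norm_nonneg Q,
    norm_nonneg ((Complex.exp (P*(t:ℂ)) - Complex.exp (Q*(t:ℂ))) / (P - Q))]

lemma aux_data_bound {n : ℕ} {N₀ : ℝ} (hN₀ : 0 < N₀) (ξ : EuclideanSpace ℝ (Fin n))
    (hξN : ‖ξ‖ ≤ N₀) (b : EuclideanSpace ℂ (Fin n)) :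
    ‖∑ k, (ξ k : ℂ) * b k‖ ≤ (n * N₀) * ‖b‖ := by
  have hξj : ∀ j, ‖((ξ j : ℝ) : ℂ)‖ ≤ N₀ := fun j => by
    rw [Complex.norm_real]
    exact le_trans (aux_coord_norm_le ξ j) hξN
  calc ‖∑ k, (ξ k : ℂ) * b k‖ ≤ ∑ k, ‖(ξ k : ℂ) * b k‖ := norm_sum_le _ _
    _ ≤ ∑ _k : Fin n, N₀ * ‖b‖ := by
        apply Finset.sum_le_sum
        intro k _
        rw [norm_mul]
        exact mul_le_mul (hξj k) (aux_coord_norm_le b k) (norm_nonneg _) hN₀.le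
    _ = (n * N₀) * ‖b‖ := by
        rw [Finset.sum_const, Finset.card_univ, Fintype.card_fin, nsmul_eq_mul]
        ring

lemma aux_rho_estimate {n : ℕ} {γ N₀ : ℝ} (hγ : 0 < γ) (hN₀ : 0 < N₀)
    (ξ : EuclideanSpace ℝ (Fin n)) (hξN : ‖ξ‖ ≤ N₀) (a : ℂ)
    (b : EuclideanSpace ℂ (Fin n)) (P Q heat : ℂ) {t M e₁ : ℝ}
    (ht0 : 0 ≤ t) (he₁ : 0 < e₁) (hM : 0 ≤ M)
    (hAb : ‖(P * Complex.exp (Q*(t:ℂ)) - Q * Complex.exp (P*(t:ℂ))) / (P - Q)‖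
      ≤ (1 + M*t) * e₁)
    (hEb : ‖(Complex.exp (P*(t:ℂ)) - Complex.exp (Q*(t:ℂ))) / (P - Q)‖ ≤ t * e₁)
    (hheat : ‖heat‖ ≤ e₁) :
    ‖((P * Complex.exp (Q*(t:ℂ)) - Q * Complex.exp (P*(t:ℂ))) / (P - Q)) * a
        - Complex.I * (γ:ℂ)
          * ((Complex.exp (P*(t:ℂ)) - Complex.exp (Q*(t:ℂ))) / (P - Q))
          * (∑ k, (ξ k : ℂ) * b k)
        - heat * a‖
      ≤ (2 + M + γ*n*N₀) * ((1+t) * e₁) * (‖a‖ + ‖b‖) := by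
  set A := (P * Complex.exp (Q*(t:ℂ)) - Q * Complex.exp (P*(t:ℂ))) / (P - Q) with hA
  set E := (Complex.exp (P*(t:ℂ)) - Complex.exp (Q*(t:ℂ))) / (P - Q) with hE
  clear_value A E
  have hS := aux_data_bound hN₀ ξ hξN b
  set S := ∑ k, (ξ k : ℂ) * b k with hSdef
  clear_value S
  have hsplit : A * a - Complex.I * (γ:ℂ) * E * S - heat * a
      = (A - heat) * a - Complex.I * (γ:ℂ) * E * S := by ring
  rw [hsplit]
  refine le_trans (norm_sub_le _ _) ?_
  rw [norm_mul, norm_mul, norm_mul, norm_mul, Complex.norm_I, one_mul,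
    Complex.norm_real, Real.norm_eq_abs, abs_of_nonneg hγ.le]
  have h1 : ‖A - heat‖ ≤ (1 + M*t) * e₁ + e₁ :=
    le_trans (norm_sub_le _ _) (by linarith)
  have hna : ‖a‖ ≤ ‖a‖ + ‖b‖ := by linarith [norm_nonneg b]
  have hnb : ‖b‖ ≤ ‖a‖ + ‖b‖ := by linarith [norm_nonneg a]
  have hnN : (0:ℝ) ≤ (n:ℝ) * N₀ := by positivity
  have hq1 : (1 + M*t) * e₁ + e₁ ≤ (2 + M) * ((1+t) * e₁) := by nlinarith
  have hpos2 : (0:ℝ) ≤ (2 + M) * ((1+t) * e₁) := mul_nonneg (by linarith) (mul_nonneg (by linarith) he₁.le)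
  have hterm1 : ‖A - heat‖ * ‖a‖ ≤ (2 + M) * ((1+t) * e₁) * (‖a‖ + ‖b‖) :=
    calc ‖A - heat‖ * ‖a‖ ≤ ((2 + M) * ((1+t) * e₁)) * ‖a‖ :=
          mul_le_mul (le_trans h1 hq1) le_rfl (norm_nonneg a) hpos2
      _ ≤ ((2 + M) * ((1+t) * e₁)) * (‖a‖ + ‖b‖) :=
          mul_le_mul_of_nonneg_left hna hpos2
  have hterm2 : γ * ‖E‖ * ‖S‖ ≤ (γ * n * N₀) * ((1+t) * e₁) * (‖a‖ + ‖b‖) := by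
    have e1 : γ * ‖E‖ ≤ γ * (t * e₁) := mul_le_mul_of_nonneg_left hEb hγ.le
    have e2 : γ * ‖E‖ * ‖S‖ ≤ (γ * (t * e₁)) * ((n * N₀) * ‖b‖) :=
      mul_le_mul e1 hS (norm_nonneg _) (by positivity)
    refine le_trans e2 ?_
    have e3 : (γ * (t * e₁)) * ((n * N₀)) ≤ (γ * n * N₀) * ((1+t) * e₁) := by
      nlinarith [mul_nonneg (mul_nonneg hγ.le (Nat.cast_nonneg n)) hN₀.le]
    calc (γ * (t * e₁)) * ((n * N₀) * ‖b‖) = ((γ * (t * e₁)) * (n * N₀)) * ‖b‖ := by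
          ring
      _ ≤ ((γ * n * N₀) * ((1+t) * e₁)) * ‖b‖ :=
          mul_le_mul_of_nonneg_right e3 (norm_nonneg b)
      _ ≤ ((γ * n * N₀) * ((1+t) * e₁)) * (‖a‖ + ‖b‖) := by
          apply mul_le_mul_of_nonneg_left hnb
          positivity
  calc ‖A - heat‖ * ‖a‖ + γ * ‖E‖ * ‖S‖
      ≤ (2 + M) * ((1+t) * e₁) * (‖a‖ + ‖b‖)
        + (γ * n * N₀) * ((1+t) * e₁) * (‖a‖ + ‖b‖) := add_le_add hterm1 hterm2
    _ = (2 + M + γ*n*N₀) * ((1+t) * e₁) * (‖a‖ + ‖b‖) := by ring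

lemma aux_v_estimate {n : ℕ} {γ ε₀ N₀ : ℝ} (hγ : 0 < γ) (hε₀ : 0 < ε₀) (hN₀ : 0 < N₀)
    (ξ : EuclideanSpace ℝ (Fin n)) (hξε : ε₀ ≤ ‖ξ‖) (hξN : ‖ξ‖ ≤ N₀) (a : ℂ)
    (b : EuclideanSpace ℂ (Fin n)) (P Q heat : ℂ) {t M e₁ : ℝ}
    (ht0 : 0 ≤ t) (he₁ : 0 < e₁) (hM : 0 ≤ M)
    (hBb : ‖(P * Complex.exp (P*(t:ℂ)) - Q * Complex.exp (Q*(t:ℂ))) / (P - Q)‖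
      ≤ (1 + M*t) * e₁)
    (hEb : ‖(Complex.exp (P*(t:ℂ)) - Complex.exp (Q*(t:ℂ))) / (P - Q)‖ ≤ t * e₁)
    (hheat : ‖heat‖ ≤ e₁) (j : Fin n) :
    ‖(heat * b j
        - Complex.I * (γ:ℂ)
          * ((Complex.exp (P*(t:ℂ)) - Complex.exp (Q*(t:ℂ))) / (P - Q))
          * ((ξ j : ℝ) : ℂ) * a
        + ((P * Complex.exp (P*(t:ℂ)) - Q * Complex.exp (Q*(t:ℂ))) / (P - Q) - heat)
          * ((ξ j : ℝ) : ℂ) * (∑ k, (ξ k : ℂ) * b k) / Complex.ofReal (‖ξ‖^2))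
      - heat * b j‖
      ≤ (γ * N₀ + (2 + M) * N₀ * (n * N₀) / ε₀^2) * ((1+t) * e₁) * (‖a‖ + ‖b‖) := by
  set B := (P * Complex.exp (P*(t:ℂ)) - Q * Complex.exp (Q*(t:ℂ))) / (P - Q) with hB
  set E := (Complex.exp (P*(t:ℂ)) - Complex.exp (Q*(t:ℂ))) / (P - Q) with hE
  clear_value B E
  have hS := aux_data_bound hN₀ ξ hξN b
  set S := ∑ k, (ξ k : ℂ) * b k with hSdef
  clear_value S
  have hξj : ‖((ξ j : ℝ) : ℂ)‖ ≤ N₀ := by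
    rw [Complex.norm_real]
    exact le_trans (aux_coord_norm_le ξ j) hξN
  have hεr2 : ε₀^2 ≤ ‖ξ‖^2 := by nlinarith [norm_nonneg ξ]
  have hsplit : heat * b j - Complex.I * (γ:ℂ) * E * ((ξ j : ℝ) : ℂ) * a
        + (B - heat) * ((ξ j : ℝ) : ℂ) * S / Complex.ofReal (‖ξ‖^2) - heat * b j
      = - (Complex.I * (γ:ℂ) * E * ((ξ j : ℝ) : ℂ) * a)
        + (B - heat) * ((ξ j : ℝ) : ℂ) * S / Complex.ofReal (‖ξ‖^2) := by ring
  rw [hsplit]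
  refine le_trans (norm_add_le _ _) ?_
  simp only [norm_neg, norm_div, norm_mul, Complex.norm_I, one_mul,
    Complex.norm_real (γ:ℝ), Real.norm_eq_abs (γ:ℝ)]
  rw [abs_of_nonneg hγ.le]
  have hr2 : ‖Complex.ofReal (‖ξ‖^2)‖ = ‖ξ‖^2 := by
    rw [Complex.norm_real, Real.norm_eq_abs, abs_of_nonneg (sq_nonneg _)]
  rw [hr2]
  have hna : ‖a‖ ≤ ‖a‖ + ‖b‖ := by linarith [norm_nonneg b]
  have hnb : ‖b‖ ≤ ‖a‖ + ‖b‖ := by linarith [norm_nonneg a]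
  have hBm : ‖B - heat‖ ≤ (1 + M*t) * e₁ + e₁ :=
    le_trans (norm_sub_le _ _) (by linarith)
  have hterm1 : γ * ‖E‖ * ‖((ξ j : ℝ) : ℂ)‖ * ‖a‖
      ≤ (γ * N₀) * ((1+t) * e₁) * (‖a‖ + ‖b‖) := by
    have e1 : γ * ‖E‖ ≤ γ * (t * e₁) := mul_le_mul_of_nonneg_left hEb hγ.le
    have e2 : γ * ‖E‖ * ‖((ξ j : ℝ) : ℂ)‖ ≤ (γ * (t * e₁)) * N₀ :=
      mul_le_mul e1 hξj (norm_nonneg _) (by positivity)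
    have e3 : γ * ‖E‖ * ‖((ξ j : ℝ) : ℂ)‖ * ‖a‖ ≤ ((γ * (t * e₁)) * N₀) * (‖a‖ + ‖b‖) :=
      mul_le_mul e2 hna (norm_nonneg _) (by positivity)
    refine le_trans e3 ?_
    apply mul_le_mul_of_nonneg_right _ (by positivity)
    nlinarith [mul_nonneg hγ.le hN₀.le]
  have hterm2 : ‖B - heat‖ * ‖((ξ j : ℝ) : ℂ)‖ * ‖S‖ / ‖ξ‖^2
      ≤ ((2 + M) * N₀ * (n * N₀) / ε₀^2) * ((1+t) * e₁) * (‖a‖ + ‖b‖) := by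
    have hq : (1 + M*t) * e₁ + e₁ ≤ (2 + M) * ((1+t) * e₁) := by nlinarith
    have hposq : (0:ℝ) ≤ (2 + M) * ((1+t) * e₁) := mul_nonneg (by linarith) (mul_nonneg (by linarith) he₁.le)
    have hnum : ‖B - heat‖ * ‖((ξ j : ℝ) : ℂ)‖ * ‖S‖
        ≤ (((2 + M) * ((1+t) * e₁)) * N₀) * ((n * N₀) * ‖b‖) := by
      apply mul_le_mul _ hS (norm_nonneg _) (by positivity)
      exact mul_le_mul (le_trans hBm hq) hξj (norm_nonneg _) hposq
    have hdiv : ‖B - heat‖ * ‖((ξ j : ℝ) : ℂ)‖ * ‖S‖ / ‖ξ‖^2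
        ≤ (((2 + M) * ((1+t) * e₁)) * N₀) * ((n * N₀) * ‖b‖) / ε₀^2 :=
      div_le_div₀ (by positivity) hnum (by positivity) hεr2
    refine le_trans hdiv ?_
    rw [div_le_iff₀ (by positivity : (0:ℝ) < ε₀^2)]
    have expand : ((2 + M) * N₀ * (n * N₀) / ε₀^2) * ((1+t) * e₁) * (‖a‖ + ‖b‖) * ε₀^2
        = (((2 + M) * ((1+t) * e₁)) * N₀) * ((n * N₀) * (‖a‖ + ‖b‖)) := by
      field_simp
    rw [expand]
    apply mul_le_mul_of_nonneg_left _ (by positivity)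
    exact mul_le_mul_of_nonneg_left hnb (by positivity)
  calc γ * ‖E‖ * ‖((ξ j : ℝ) : ℂ)‖ * ‖a‖ + ‖B - heat‖ * ‖((ξ j : ℝ) : ℂ)‖ * ‖S‖ / ‖ξ‖^2
      ≤ (γ * N₀) * ((1+t) * e₁) * (‖a‖ + ‖b‖)
        + ((2 + M) * N₀ * (n * N₀) / ε₀^2) * ((1+t) * e₁) * (‖a‖ + ‖b‖) :=
        add_le_add hterm1 hterm2
    _ = (γ * N₀ + (2 + M) * N₀ * (n * N₀) / ε₀^2) * ((1+t) * e₁) * (‖a‖ + ‖b‖) := by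
        ring

lemma aux_grow {c₁ t : ℝ} (hc₁ : 0 < c₁) (ht0 : 0 ≤ t) :
    (1+t) * Real.exp (-(c₁*t)) ≤ (1 + 2/c₁) * Real.exp (-(c₁/2*t)) := by
  have hsplit : Real.exp (-(c₁*t)) = Real.exp (-(c₁/2*t)) * Real.exp (-(c₁/2*t)) := by
    rw [← Real.exp_add]
    congr 1
    ring
  have hexp1 : Real.exp (-(c₁/2*t)) ≤ 1 := Real.exp_le_one_iff.mpr (by nlinarith)
  have hx : c₁/2*t ≤ Real.exp (c₁/2*t) := by
    have := Real.add_one_le_exp (c₁/2*t)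
    linarith
  have htexp : t * Real.exp (-(c₁/2*t)) ≤ 2/c₁ := by
    rw [Real.exp_neg, ← div_eq_mul_inv, div_le_iff₀ (Real.exp_pos _)]
    have h2 : (2/c₁) * (c₁/2*t) = t := by
      field_simp
    calc t = (2/c₁) * (c₁/2*t) := h2.symm
      _ ≤ (2/c₁) * Real.exp (c₁/2*t) :=
          mul_le_mul_of_nonneg_left hx (by positivity)
  have h2 : (1+t) * Real.exp (-(c₁/2*t)) ≤ 1 + 2/c₁ := by
    have := Real.exp_pos (-(c₁/2*t))
    nlinarith
  calc (1+t) * Real.exp (-(c₁*t))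
      = ((1+t) * Real.exp (-(c₁/2*t))) * Real.exp (-(c₁/2*t)) := by rw [hsplit]; ring
    _ ≤ (1 + 2/c₁) * Real.exp (-(c₁/2*t)) :=
        mul_le_mul_of_nonneg_right h2 (Real.exp_pos _).le


set_option maxHeartbeats 1000000 in
/-- On any annulus `ε₀ ≤ |ξ| ≤ N₀`, the Fourier-space solution minus the
heat parts of the data decays exponentially in time, uniformly in the data. -/
theorem exponential_decay_annulus
    (α β γ : ℝ) (hα : 0 < α) (hβ : 0 ≤ β) (hγ : 0 < γ) {n : ℕ}
    (ε₀ N₀ : ℝ) (hε₀ : 0 < ε₀) (hεN : ε₀ ≤ N₀) :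
    ∃ c C : ℝ, 0 < c ∧ 0 < C ∧
      ∀ ξ : EuclideanSpace ℝ (Fin n), ε₀ ≤ ‖ξ‖ → ‖ξ‖ ≤ N₀ →
        lamP α β γ ‖ξ‖ ≠ lamM α β γ ‖ξ‖ →
      ∀ (a : ℂ) (b : EuclideanSpace ℂ (Fin n)) (t : ℝ), 1 ≤ t →
        ‖rhoHat α β γ a b ξ t - Complex.exp (Complex.ofReal (-((α+β)/2 * ‖ξ‖^2 * t))) * a‖
          + ‖(WithLp.equiv 2 (Fin n → ℂ)).symm fun j =>
              vHat α β γ a b ξ t j - Complex.exp (Complex.ofReal (-(α * ‖ξ‖^2 * t))) * b j‖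
        ≤ C * Real.exp (-(c*t)) * (‖a‖ + ‖b‖) := by
  have hA : 0 < α + β := by linarith
  have hN₀pos : 0 < N₀ := lt_of_lt_of_le hε₀ hεN
  set c₁ := min (min ((α+β)/2*ε₀^2) (α*ε₀^2)) (γ^2/(α+β)) with hc₁def
  have hc₁pos : 0 < c₁ :=
    lt_min (lt_min (by positivity) (by positivity)) (by positivity)
  set M := (α+β)/2*N₀^2 + (α+β)/2 * Real.sqrt (N₀^4 + 4*γ^2/(α+β)^2*N₀^2) with hMdef
  have hMpos : 0 ≤ M := by positivity
  set K₁ := 2 + M + γ * n * N₀ with hK₁def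
  have hK₁pos : 0 < K₁ := by
    have : 0 ≤ γ * n * N₀ := by positivity
    linarith
  set K₂ := γ * N₀ + (2 + M) * N₀ * (n * N₀) / ε₀^2 with hK₂def
  have hK₂pos : 0 ≤ K₂ := by positivity
  have hCpos : 0 < (K₁ + Real.sqrt n * K₂) * (1 + 2/c₁) := by
    have h1 : 0 ≤ Real.sqrt n * K₂ := mul_nonneg (Real.sqrt_nonneg _) hK₂pos
    have h2 : 0 < 1 + 2/c₁ := by positivity
    exact mul_pos (by linarith) h2
  refine ⟨c₁/2, (K₁ + Real.sqrt n * K₂) * (1 + 2/c₁), by positivity, hCpos, ?_⟩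
  intro ξ hξε hξN hPQ a b t ht
  clear_value c₁ M K₁ K₂
  have ht0 : (0:ℝ) ≤ t := by linarith
  have habnn : 0 ≤ ‖a‖ + ‖b‖ := by positivity
  have hrpos : 0 < ‖ξ‖ := lt_of_lt_of_le hε₀ hξε
  -- bounds for the roots
  have hre := aux_re_lam_bound α β γ hα hβ hγ hε₀ hξε
  have hc₁le : c₁ ≤ min ((α+β)/2*ε₀^2) (γ^2/(α+β)) := by
    rw [hc₁def]
    exact le_min (le_trans (min_le_left _ _) (min_le_left _ _)) (min_le_right _ _)
  have hPre : (lamP α β γ ‖ξ‖).re ≤ -c₁ := le_trans hre.1 (by linarith)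
  have hQre : (lamM α β γ ‖ξ‖).re ≤ -c₁ := le_trans hre.2 (by linarith)
  have hnl := aux_norm_lam_bound α β γ hα hβ (norm_nonneg ξ) hξN
  have hPn : ‖lamP α β γ ‖ξ‖‖ ≤ M := by rw [hMdef]; exact hnl.1
  have hQn : ‖lamM α β γ ‖ξ‖‖ ≤ M := by rw [hMdef]; exact hnl.2
  set P := lamP α β γ ‖ξ‖ with hPdef
  set Q := lamM α β γ ‖ξ‖ with hQdef
  clear_value P Q
  -- exponential bounds
  set e₁ := Real.exp (-(c₁*t)) with he₁def
  clear_value e₁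
  have he₁pos : 0 < e₁ := he₁def ▸ Real.exp_pos _
  have hEb : ‖(Complex.exp (P * (t:ℂ)) - Complex.exp (Q * (t:ℂ))) / (P - Q)‖ ≤ t * e₁ := by
    rw [he₁def]
    exact aux_exp_div_diff_bound P Q hPQ ht0 hPre hQre
  have hexpP : ‖Complex.exp (P * (t:ℂ))‖ ≤ e₁ := by
    rw [Complex.norm_exp, he₁def]
    apply Real.exp_le_exp.mpr
    have hh : (P * (t:ℂ)).re = P.re * t := by simp [Complex.mul_re]
    rw [hh]
    nlinarith [hPre, ht0]
  have hεr2 : ε₀^2 ≤ ‖ξ‖^2 := by nlinarith [hξε, hε₀]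
  have hheat1 : ‖Complex.exp (Complex.ofReal (-((α+β)/2 * ‖ξ‖^2 * t)))‖ ≤ e₁ := by
    rw [Complex.norm_exp, Complex.ofReal_re, he₁def]
    apply Real.exp_le_exp.mpr
    have h1 : c₁ ≤ (α+β)/2*ε₀^2 := by
      rw [hc₁def]; exact le_trans (min_le_left _ _) (min_le_left _ _)
    have h2 : (α+β)/2*ε₀^2 ≤ (α+β)/2*‖ξ‖^2 :=
      mul_le_mul_of_nonneg_left hεr2 (by positivity)
    nlinarith
  have hheat2 : ‖Complex.exp (Complex.ofReal (-(α * ‖ξ‖^2 * t)))‖ ≤ e₁ := by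
    rw [Complex.norm_exp, Complex.ofReal_re, he₁def]
    apply Real.exp_le_exp.mpr
    have h1 : c₁ ≤ α*ε₀^2 := by
      rw [hc₁def]; exact le_trans (min_le_left _ _) (min_le_right _ _)
    have h2 : α*ε₀^2 ≤ α*‖ξ‖^2 := mul_le_mul_of_nonneg_left hεr2 hα.le
    nlinarith
  have hAb := aux_Ab P Q hPQ ht0 he₁pos hPn hexpP hEb
  have hBb := aux_Bb P Q hPQ ht0 he₁pos hQn hexpP hEb
  -- the density estimate
  have hrho : ‖rhoHat α β γ a b ξ t
        - Complex.exp (Complex.ofReal (-((α+β)/2 * ‖ξ‖^2 * t))) * a‖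
      ≤ K₁ * ((1+t) * e₁) * (‖a‖ + ‖b‖) := by
    have hest := aux_rho_estimate hγ hN₀pos ξ hξN a b P Q
      (Complex.exp (Complex.ofReal (-((α+β)/2 * ‖ξ‖^2 * t)))) ht0 he₁pos hMpos
      hAb hEb hheat1
    rw [hK₁def]
    simpa only [rhoHat, ← hPdef, ← hQdef] using hest
  -- the velocity estimate
  have hvj : ∀ j, ‖vHat α β γ a b ξ t j
        - Complex.exp (Complex.ofReal (-(α * ‖ξ‖^2 * t))) * b j‖
      ≤ K₂ * ((1+t) * e₁) * (‖a‖ + ‖b‖) := by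
    intro j
    have hest := aux_v_estimate hγ hε₀ hN₀pos ξ hξε hξN a b P Q
      (Complex.exp (Complex.ofReal (-(α * ‖ξ‖^2 * t)))) ht0 he₁pos hMpos
      hBb hEb hheat2 j
    rw [hK₂def]
    simpa only [vHat, WithLp.equiv_symm_apply, PiLp.toLp_apply, ← hPdef, ← hQdef] using hest
  have hvec : ‖(WithLp.equiv 2 (Fin n → ℂ)).symm fun j =>
        vHat α β γ a b ξ t j - Complex.exp (Complex.ofReal (-(α * ‖ξ‖^2 * t))) * b j‖
      ≤ Real.sqrt n * (K₂ * ((1+t) * e₁) * (‖a‖ + ‖b‖)) := by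
    refine aux_euclid_norm_le _ _ ?_ ?_
    · exact mul_nonneg (mul_nonneg hK₂pos
        (mul_nonneg (by linarith : (0:ℝ) ≤ 1 + t) he₁pos.le)) habnn
    · intro j
      simpa only [WithLp.equiv_symm_apply, PiLp.toLp_apply] using hvj j
  -- combine
  have hgrow : (1+t) * e₁ ≤ (1 + 2/c₁) * Real.exp (-(c₁/2*t)) := by
    rw [he₁def]
    exact aux_grow hc₁pos ht0
  have hKnn : 0 ≤ K₁ + Real.sqrt n * K₂ := by
    have := mul_nonneg (Real.sqrt_nonneg (n:ℝ)) hK₂pos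
    linarith
  calc ‖rhoHat α β γ a b ξ t - Complex.exp (Complex.ofReal (-((α+β)/2 * ‖ξ‖^2 * t))) * a‖
      + ‖(WithLp.equiv 2 (Fin n → ℂ)).symm fun j =>
          vHat α β γ a b ξ t j - Complex.exp (Complex.ofReal (-(α * ‖ξ‖^2 * t))) * b j‖
      ≤ K₁ * ((1+t) * e₁) * (‖a‖ + ‖b‖)
        + Real.sqrt n * (K₂ * ((1+t) * e₁) * (‖a‖ + ‖b‖)) := add_le_add hrho hvec
    _ = (K₁ + Real.sqrt n * K₂) * ((1+t) * e₁) * (‖a‖ + ‖b‖) := by ring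
    _ ≤ (K₁ + Real.sqrt n * K₂) * ((1 + 2/c₁) * Real.exp (-(c₁/2*t))) * (‖a‖ + ‖b‖) := by
        apply mul_le_mul_of_nonneg_right _ habnn
        exact mul_le_mul_of_nonneg_left hgrow hKnn
    _ = (K₁ + Real.sqrt n * K₂) * (1 + 2/c₁) * Real.exp (-(c₁/2*t)) * (‖a‖ + ‖b‖) := by
        ring

end
end

section
/- Fix constants α > 0, γ > 0, β ≥ 0. There exist ε₀ ∈ (0, min(1, 2γ/(α+β))), c > 0 and C > 0 such that for all ξ ∈ ℝⁿ with 0 < |ξ| ≤ ε₀ and all t ≥ 1: |K̂₀(t,ξ) − Ĵ₀(t,ξ)| ≤ C e^{−c|ξ|²t}. -/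
open MeasureTheory Filter
open scoped ENNReal Topology

noncomputable section

lemma K0aux_abs_cos_sub_cos_le (a b : ℝ) : |Real.cos a - Real.cos b| ≤ |a - b| := by
  rw [Real.cos_sub_cos]
  have h1 := Real.abs_sin_le_one ((a+b)/2)
  have h2 := Real.abs_sin_le_abs (x := (a-b)/2)
  calc |-2 * Real.sin ((a+b)/2) * Real.sin ((a-b)/2)|
      = 2 * |Real.sin ((a+b)/2)| * |Real.sin ((a-b)/2)| := by
        rw [abs_mul, abs_mul]; norm_num
    _ ≤ 2 * 1 * |(a-b)/2| := by gcongr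
    _ = |a - b| := by rw [abs_div]; norm_num; ring

lemma K0aux_xexp (x : ℝ) (hx : 0 ≤ x) : x * Real.exp (-x) ≤ 1 := by
  have h : x ≤ Real.exp x := (Real.add_one_le_exp x).trans' (by linarith)
  have hp : 0 < Real.exp (-x) := Real.exp_pos _
  calc x * Real.exp (-x) ≤ Real.exp x * Real.exp (-x) := by gcongr
    _ = 1 := by rw [← Real.exp_add]; simp

lemma K0aux_key (α β γ : ℝ) (hα : 0 < α) (hβ : 0 ≤ β) (hγ : 0 < γ) :
    ∃ ε₀ c C : ℝ, 0 < ε₀ ∧ ε₀ < min 1 (2*γ/(α+β)) ∧ 0 < c ∧ 0 < C ∧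
      ∀ r : ℝ, 0 < r → r ≤ ε₀ → ∀ t : ℝ, 1 ≤ t →
        |K0hat α β γ t r - J0hat α β γ t r| ≤ C * Real.exp (-(c * r^2 * t)) := by
  set s := α + β with hs_def
  have hs : 0 < s := by positivity
  have hm : 0 < min 1 (2*γ/s) := lt_min one_pos (by positivity)
  clear_value s
  refine ⟨min 1 (2*γ/s) / 2, s/4, 2*s/γ, by positivity, by linarith, by positivity,
    by positivity, ?_⟩
  intro r hr hrε t ht
  have ht0 : 0 < t := lt_of_lt_of_le one_pos ht
  -- basic bounds on r
  have hrγ : s * r ≤ γ := by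
    have h1 : r ≤ (2*γ/s)/2 := hrε.trans (by gcongr; exact min_le_right _ _)
    have h2 : s * r ≤ s * ((2*γ/s)/2) := by gcongr
    calc s * r ≤ s * ((2*γ/s)/2) := h2
      _ = γ := by field_simp
  have hsr2 : s * r * (s * r) ≤ γ * γ :=
    mul_le_mul hrγ hrγ (by positivity) hγ.le
  have harg : γ^2/4 ≤ γ^2 - s^2/4 * r^2 := by nlinarith
  have harg0 : 0 ≤ γ^2 - s^2/4 * r^2 := le_trans (by positivity) harg
  set w := Real.sqrt (γ^2 - s^2/4 * r^2) with hw_def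
  clear_value w
  have hw0 : 0 ≤ w := hw_def ▸ Real.sqrt_nonneg _
  have hwsq : w^2 = γ^2 - s^2/4 * r^2 := by rw [hw_def]; exact Real.sq_sqrt harg0
  have hwlb : γ/2 ≤ w := by nlinarith
  have hwγ : w ≤ γ := by nlinarith
  have hwp : 0 < w := lt_of_lt_of_le (by positivity) hwlb
  have hwub : γ - w ≤ s^2/4 * r^2 / γ := by
    rw [le_div_iff₀ hγ]
    nlinarith [mul_nonneg hw0 (sub_nonneg.2 hwγ)]
  have hI : lamI α β γ r = r * w := by rw [lamI, ← hs_def, hw_def]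
  have hIp : 0 < lamI α β γ r := by rw [hI]; positivity
  -- factor the difference
  have hE : Real.exp (-(s/2 * r^2 * t)) = Real.exp (lamR α β r * t) := by
    rw [lamR, ← hs_def]; ring_nf
  have hdiff : K0hat α β γ t r - J0hat α β γ t r =
      (r⁻¹ * (Real.cos (lamI α β γ r * t) - Real.cos (γ*r*t))
        - (lamR α β r / (lamI α β γ r * r)) * Real.sin (lamI α β γ r * t))
      * Real.exp (lamR α β r * t) := by
    rw [K0hat, J0hat, ← hs_def, ← hE]; ring
  set A := r⁻¹ * (Real.cos (lamI α β γ r * t) - Real.cos (γ*r*t))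
      - (lamR α β r / (lamI α β γ r * r)) * Real.sin (lamI α β γ r * t) with hA_def
  -- bound the bracket
  have hbr : |A| ≤ s^2/(4*γ) * (r^2 * t) + s/γ := by
    have h1 : |r⁻¹ * (Real.cos (lamI α β γ r * t) - Real.cos (γ*r*t))|
        ≤ s^2/(4*γ) * (r^2 * t) := by
      rw [abs_mul, abs_inv, abs_of_pos hr]
      have hcc := K0aux_abs_cos_sub_cos_le (lamI α β γ r * t) (γ*r*t)
      have h2 : |lamI α β γ r * t - γ*r*t| = r * t * (γ - w) := by
        rw [hI, show r * w * t - γ*r*t = -(r * t * (γ - w)) by ring, abs_neg,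
          abs_of_nonneg (mul_nonneg (by positivity) (by linarith))]
      have h3 : r * t * (γ - w) ≤ r * t * (s^2/4 * r^2 / γ) :=
        mul_le_mul_of_nonneg_left hwub (by positivity)
      calc r⁻¹ * |Real.cos (lamI α β γ r * t) - Real.cos (γ*r*t)|
          ≤ r⁻¹ * (r * t * (s^2/4 * r^2 / γ)) := by
            refine mul_le_mul_of_nonneg_left ?_ (by positivity)
            exact (hcc.trans_eq h2).trans h3
        _ = s^2/(4*γ) * (r^2 * t) := by field_simp
    have h2 : |(lamR α β r / (lamI α β γ r * r)) * Real.sin (lamI α β γ r * t)| ≤ s/γ := by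
      rw [abs_mul, abs_div]
      have hsin := Real.abs_sin_le_one (lamI α β γ r * t)
      have habs : |lamR α β r| = s/2 * r^2 := by
        rw [lamR, ← hs_def, abs_neg, abs_of_nonneg (by positivity)]
      have habs2 : |lamI α β γ r * r| = r * w * r := by
        rw [hI, abs_of_nonneg (by positivity)]
      rw [habs, habs2]
      calc s/2 * r^2 / (r * w * r) * |Real.sin (lamI α β γ r * t)|
          ≤ s/2 * r^2 / (r * w * r) * 1 :=
            mul_le_mul_of_nonneg_left hsin (by positivity)
        _ = s/2 / w := by field_simp
        _ ≤ s/2 / (γ/2) := by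
            apply div_le_div_of_nonneg_left (by positivity) (by positivity) hwlb
        _ = s/γ := by field_simp
    rw [hA_def]
    exact (abs_sub _ _).trans (add_le_add h1 h2)
  -- combine
  set x := s/4 * r^2 * t with hx_def
  have hx0 : 0 ≤ x := by positivity
  set e := Real.exp (-x) with he_def
  have hEx : Real.exp (lamR α β r * t) = e * e := by
    rw [he_def, ← Real.exp_add, lamR, ← hs_def]; congr 1; rw [hx_def]; ring
  have hexp1 : e ≤ 1 := Real.exp_le_one_iff.mpr (by linarith)
  have hxe : x * e ≤ 1 := K0aux_xexp x hx0
  have hep : (0:ℝ) < e := Real.exp_pos _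
  have hK : s^2/(4*γ) * (r^2 * t) + s/γ = s/γ * x + s/γ := by
    rw [hx_def]; field_simp
  rw [hdiff, abs_mul, abs_of_pos (Real.exp_pos _), hEx]
  calc |A| * (e * e) ≤ (s/γ * x + s/γ) * (e * e) := by
        refine mul_le_mul_of_nonneg_right ?_ (by positivity)
        exact hbr.trans_eq hK
    _ = s/γ * ((x * e) * e) + s/γ * (e * e) := by ring
    _ ≤ s/γ * (1 * e) + s/γ * (1 * e) := by
        refine add_le_add ?_ ?_ <;> refine mul_le_mul_of_nonneg_left ?_ (by positivity) <;>
          exact mul_le_mul_of_nonneg_right (by assumption) hep.le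
    _ = 2*s/γ * e := by ring

/-- For small frequencies, the kernel `K̂₀` is approximated by the profile
`Ĵ₀` up to an exponentially decaying error `C e^{-c|ξ|²t}`. -/
theorem K0_approx_J0
    (α β γ : ℝ) (hα : 0 < α) (hβ : 0 ≤ β) (hγ : 0 < γ) {n : ℕ} :
    ∃ ε₀ c C : ℝ, 0 < ε₀ ∧ ε₀ < min 1 (2*γ/(α+β)) ∧ 0 < c ∧ 0 < C ∧
      ∀ ξ : EuclideanSpace ℝ (Fin n), 0 < ‖ξ‖ → ‖ξ‖ ≤ ε₀ → ∀ t : ℝ, 1 ≤ t →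
        |K0hat α β γ t ‖ξ‖ - J0hat α β γ t ‖ξ‖| ≤ C * Real.exp (-(c * ‖ξ‖^2 * t)) := by
  obtain ⟨ε₀, c, C, h1, h2, h3, h4, h5⟩ := K0aux_key α β γ hα hβ hγ
  exact ⟨ε₀, c, C, h1, h2, h3, h4, fun ξ hξ hξ' t ht => h5 ‖ξ‖ hξ hξ' t ht⟩

end
end

section
/- Fix constants α > 0, γ > 0, β ≥ 0. There exist ε₀ ∈ (0, min(1, 2γ/(α+β))), c > 0 and C > 0 such that for all a ∈ ℂ, b ∈ ℂⁿ, all ξ ∈ ℝⁿ with 0 < |ξ| ≤ ε₀, and all t ≥ 1: |ρ̂(t,ξ) − e^{−((α+β)/2)|ξ|²t}a − Ĵ₀(t,ξ)|ξ|a − Ĵ₁(t,ξ)·(|ξ|b)| ≤ C e^{−c|ξ|²t}·|ξ|·(|a| + |b|), where ρ̂ is the Fourier-space solution with data (a,b). -/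
open MeasureTheory Filter
open scoped ENNReal Topology

noncomputable section

lemma cpow_half_neg' (x : ℝ) (hx : x < 0) :
    (x : ℂ) ^ ((1:ℂ)/2) = Complex.I * Real.sqrt (-x) := by
  have hx0 : (x : ℂ) ≠ 0 := by exact_mod_cast (show (x:ℂ) ≠ 0 by exact_mod_cast hx.ne)
  rw [Complex.cpow_def_of_ne_zero hx0]
  rw [Complex.log]
  have harg : Complex.arg x = Real.pi := Complex.arg_ofReal_of_neg hx
  have habs : ‖(x : ℂ)‖ = -x := by
    rw [Complex.norm_real, Real.norm_eq_abs, abs_of_neg hx]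
  rw [harg, habs]
  rw [show (↑(Real.log (-x)) + ↑Real.pi * Complex.I) * (1/2 : ℂ)
      = ↑(Real.log (-x) / 2) + ↑(Real.pi/2) * Complex.I by push_cast; ring]
  rw [Complex.exp_add, Complex.exp_mul_I, ← Complex.ofReal_cos, ← Complex.ofReal_sin,
    Real.cos_pi_div_two, Real.sin_pi_div_two, ← Complex.ofReal_exp]
  have : Real.exp (Real.log (-x) / 2) = Real.sqrt (-x) := by
    rw [Real.sqrt_eq_rpow, Real.rpow_def_of_pos (by linarith)]
    ring_nf
  rw [this]
  push_cast
  ring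

lemma sqrt_helper' (α β γ r : ℝ) (hK : 0 < α + β) (hr : 0 ≤ r) :
    (α+β)/2 * Real.sqrt (-(r^4 - 4*γ^2/(α+β)^2 * r^2)) = lamI α β γ r := by
  rw [lamI]
  have h1 : (α+β)/2 * Real.sqrt (-(r^4 - 4*γ^2/(α+β)^2 * r^2))
      = Real.sqrt (((α+β)/2)^2 * (-(r^4 - 4*γ^2/(α+β)^2 * r^2))) := by
    rw [Real.sqrt_mul (by positivity), Real.sqrt_sq (by positivity)]
  have h2 : r * Real.sqrt (γ^2 - (α+β)^2/4 * r^2)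
      = Real.sqrt (r^2 * (γ^2 - (α+β)^2/4 * r^2)) := by
    rw [Real.sqrt_mul (by positivity), Real.sqrt_sq hr]
  rw [h1, h2]
  congr 1
  field_simp
  ring

lemma radicand_neg' (α β γ r : ℝ) (hK : 0 < α + β) (hr : 0 < r)
    (hr2 : r < 2*γ/(α+β)) : r^4 - 4*γ^2/(α+β)^2 * r^2 < 0 := by
  have h2 : r^2 < 4*γ^2/(α+β)^2 := by
    have h : r^2 < (2*γ/(α+β))^2 := sq_lt_sq' (by nlinarith) hr2
    have e : (2*γ/(α+β))^2 = 4*γ^2/(α+β)^2 := by field_simp; ring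
    linarith [e ▸ h]
  nlinarith [mul_lt_mul_of_pos_right h2 (pow_pos hr 2)]

lemma lamP_eq' (α β γ r : ℝ) (hK : 0 < α + β) (hr : 0 < r)
    (hr2 : r < 2*γ/(α+β)) :
    lamP α β γ r = Complex.ofReal (-((α+β)/2 * r^2)) + Complex.I * Complex.ofReal (lamI α β γ r) := by
  rw [lamP, cpow_half_neg' _ (radicand_neg' α β γ r hK hr hr2)]
  rw [show (Complex.ofReal ((α+β)/2)) * (Complex.I * Real.sqrt (-(r^4 - 4*γ^2/(α+β)^2 * r^2)))
      = Complex.I * Complex.ofReal ((α+β)/2 * Real.sqrt (-(r^4 - 4*γ^2/(α+β)^2 * r^2))) by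
    push_cast; ring]
  rw [sqrt_helper' α β γ r hK hr.le]

lemma lamM_eq' (α β γ r : ℝ) (hK : 0 < α + β) (hr : 0 < r)
    (hr2 : r < 2*γ/(α+β)) :
    lamM α β γ r = Complex.ofReal (-((α+β)/2 * r^2)) - Complex.I * Complex.ofReal (lamI α β γ r) := by
  rw [lamM, cpow_half_neg' _ (radicand_neg' α β γ r hK hr hr2)]
  rw [show (Complex.ofReal ((α+β)/2)) * (Complex.I * Real.sqrt (-(r^4 - 4*γ^2/(α+β)^2 * r^2)))
      = Complex.I * Complex.ofReal ((α+β)/2 * Real.sqrt (-(r^4 - 4*γ^2/(α+β)^2 * r^2))) by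
    push_cast; ring]
  rw [sqrt_helper' α β γ r hK hr.le]

lemma cos_lip' (x y : ℝ) : |Real.cos x - Real.cos y| ≤ |x - y| := by
  rw [Real.cos_sub_cos, abs_mul, abs_mul]
  have h1 := Real.abs_sin_le_one ((x+y)/2)
  have h2 : |Real.sin ((x-y)/2)| ≤ |(x-y)/2| := Real.abs_sin_le_abs
  have h3 : |(x-y)/2| = |x-y|/2 := by rw [abs_div, abs_two]
  have h4 : |(-2 : ℝ)| = 2 := by norm_num
  rw [h4]
  nlinarith [abs_nonneg (Real.sin ((x-y)/2)), abs_nonneg (x-y), abs_nonneg (Real.sin ((x+y)/2))]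

lemma sin_lip' (x y : ℝ) : |Real.sin x - Real.sin y| ≤ |x - y| := by
  rw [Real.sin_sub_sin, abs_mul, abs_mul]
  have h1 := Real.abs_cos_le_one ((x+y)/2)
  have h2 : |Real.sin ((x-y)/2)| ≤ |(x-y)/2| := Real.abs_sin_le_abs
  have h3 : |(x-y)/2| = |x-y|/2 := by rw [abs_div, abs_two]
  have h4 : |(2 : ℝ)| = 2 := by norm_num
  rw [h4]
  nlinarith [abs_nonneg (Real.sin ((x-y)/2)), abs_nonneg (x-y), abs_nonneg (Real.cos ((x+y)/2))]

lemma expP' (α β γ r t : ℝ) (hK : 0 < α + β) (hr : 0 < r) (hr2 : r < 2*γ/(α+β)) :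
    Complex.exp (lamP α β γ r * (t:ℂ))
      = Complex.ofReal (Real.exp (-((α+β)/2 * r^2 * t)))
        * (Complex.ofReal (Real.cos (lamI α β γ r * t))
           + Complex.ofReal (Real.sin (lamI α β γ r * t)) * Complex.I) := by
  rw [lamP_eq' α β γ r hK hr hr2,
    show ((Complex.ofReal (-((α+β)/2*r^2)) + Complex.I*Complex.ofReal (lamI α β γ r)) * (t:ℂ))
      = Complex.ofReal (-((α+β)/2*r^2*t)) + Complex.ofReal (lamI α β γ r*t)*Complex.I by
      push_cast; ring,
    Complex.exp_add, Complex.exp_mul_I, ← Complex.ofReal_cos, ← Complex.ofReal_sin,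
    ← Complex.ofReal_exp]

lemma expM' (α β γ r t : ℝ) (hK : 0 < α + β) (hr : 0 < r) (hr2 : r < 2*γ/(α+β)) :
    Complex.exp (lamM α β γ r * (t:ℂ))
      = Complex.ofReal (Real.exp (-((α+β)/2 * r^2 * t)))
        * (Complex.ofReal (Real.cos (lamI α β γ r * t))
           - Complex.ofReal (Real.sin (lamI α β γ r * t)) * Complex.I) := by
  rw [lamM_eq' α β γ r hK hr hr2,
    show ((Complex.ofReal (-((α+β)/2*r^2)) - Complex.I*Complex.ofReal (lamI α β γ r)) * (t:ℂ))
      = Complex.ofReal (-((α+β)/2*r^2*t)) + Complex.ofReal (-(lamI α β γ r*t))*Complex.I by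
      push_cast; ring,
    Complex.exp_add, Complex.exp_mul_I, ← Complex.ofReal_cos, ← Complex.ofReal_sin,
    Real.cos_neg, Real.sin_neg, ← Complex.ofReal_exp]
  push_cast
  ring

lemma resid_identity (R m E c1 s1 cσ sσ γ rr : ℝ) (hm : m ≠ 0) (hγ : γ ≠ 0) (hr : rr ≠ 0)
    (a S : ℂ) :
    (((↑R + Complex.I*↑m) * (↑E*(↑c1 - ↑s1*Complex.I)) - (↑R - Complex.I*↑m) * (↑E*(↑c1 + ↑s1*Complex.I)))
      / ((↑R + Complex.I*↑m) - (↑R - Complex.I*↑m))) * a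
    - Complex.I * ↑γ * ((↑E*(↑c1 + ↑s1*Complex.I) - ↑E*(↑c1 - ↑s1*Complex.I))
      / ((↑R + Complex.I*↑m) - (↑R - Complex.I*↑m))) * S
    - ↑E * a - ↑(rr⁻¹ * (cσ - 1) * E) * (rr:ℂ) * a
    - (-Complex.I * ↑(E * sσ / rr)) * S
    = Complex.ofReal (E * ((c1 - cσ) - (R/m) * s1)) * a
      - Complex.I * Complex.ofReal (E * γ * (s1/m - sσ/(γ*rr))) * S := by
  have hd : ((↑R + Complex.I*↑m) - (↑R - Complex.I*↑m)) = 2*Complex.I*(↑m:ℂ) := by ring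
  rw [hd]
  have hmC : (m:ℂ) ≠ 0 := by exact_mod_cast hm
  have hγC : (γ:ℂ) ≠ 0 := by exact_mod_cast hγ
  have hrC : (rr:ℂ) ≠ 0 := by exact_mod_cast hr
  push_cast
  field_simp
  ring

lemma key_identity (α β γ r t : ℝ) (hK : 0 < α+β) (hγ : 0 < γ) (hr0 : 0 < r)
    (hrK : r < 2*γ/(α+β)) (hm0 : lamI α β γ r ≠ 0) (a S : ℂ) :
    ((lamP α β γ r * Complex.exp (lamM α β γ r * (t:ℂ))
        - lamM α β γ r * Complex.exp (lamP α β γ r * (t:ℂ)))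
      / (lamP α β γ r - lamM α β γ r)) * a
    - Complex.I * (γ:ℂ) * ((Complex.exp (lamP α β γ r * (t:ℂ))
        - Complex.exp (lamM α β γ r * (t:ℂ)))
      / (lamP α β γ r - lamM α β γ r)) * S
    - Complex.exp (Complex.ofReal (-((α+β)/2 * r^2 * t))) * a
    - Complex.ofReal (J0hat α β γ t r) * (r:ℂ) * a
    - (-Complex.I * Complex.ofReal (Real.exp (-((α+β)/2 * r^2 * t)) * Real.sin (γ*r*t) / r)) * S
    = Complex.ofReal (Real.exp (-((α+β)/2 * r^2 * t))
        * ((Real.cos (lamI α β γ r * t) - Real.cos (γ*r*t))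
            - (-((α+β)/2*r^2)/(lamI α β γ r)) * Real.sin (lamI α β γ r * t))) * a
      - Complex.I * Complex.ofReal (Real.exp (-((α+β)/2 * r^2 * t)) * γ
          * (Real.sin (lamI α β γ r * t)/(lamI α β γ r) - Real.sin (γ*r*t)/(γ*r))) * S := by
  rw [J0hat, expP' α β γ r t hK hr0 hrK, expM' α β γ r t hK hr0 hrK,
    lamP_eq' α β γ r hK hr0 hrK, lamM_eq' α β γ r hK hr0 hrK, ← Complex.ofReal_exp]
  exact resid_identity (-((α+β)/2*r^2)) (lamI α β γ r) (Real.exp (-((α+β)/2 * r^2 * t)))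
    (Real.cos (lamI α β γ r * t)) (Real.sin (lamI α β γ r * t))
    (Real.cos (γ*r*t)) (Real.sin (γ*r*t)) γ r hm0 hγ.ne' hr0.ne' a S

lemma habs_sub (x y : ℝ) : |x - y| ≤ |x| + |y| := by
  rw [sub_eq_add_neg]
  exact (abs_add_le x (-y)).trans (by rw [abs_neg])

set_option maxHeartbeats 1600000 in
lemma real_bounds (α β γ r t : ℝ) (hK : 0 < α + β) (hγ : 0 < γ) (hr0 : 0 < r)
    (hr1 : r ≤ 1) (hKr : (α+β)*r ≤ γ) (ht : 1 ≤ t) :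
    |Real.exp (-((α+β)/2 * r^2 * t))
        * ((Real.cos (lamI α β γ r * t) - Real.cos (γ*r*t))
            - (-((α+β)/2*r^2)/(lamI α β γ r)) * Real.sin (lamI α β γ r * t))|
      ≤ 2*((α+β)/γ) * r * Real.exp (-((α+β)/4 * r^2 * t))
    ∧ |Real.exp (-((α+β)/2 * r^2 * t)) * γ
          * (Real.sin (lamI α β γ r * t)/(lamI α β γ r) - Real.sin (γ*r*t)/(γ*r))|
      ≤ ((α+β)^2/(2*γ^2) + (α+β)/γ) * Real.exp (-((α+β)/4 * r^2 * t)) := by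
  have htpos : (0:ℝ) ≤ t := by linarith
  have hKr2 : ((α+β)*r)^2 ≤ γ^2 := by
    nlinarith [mul_pos hK hr0]
  have hu0 : (γ/2)^2 ≤ γ^2 - (α+β)^2/4 * r^2 := by nlinarith
  have hu0' : 0 ≤ γ^2 - (α+β)^2/4 * r^2 := le_trans (by positivity) hu0
  have hs_ub : Real.sqrt (γ^2 - (α+β)^2/4 * r^2) ≤ γ := by
    calc Real.sqrt (γ^2 - (α+β)^2/4 * r^2) ≤ Real.sqrt (γ^2) := Real.sqrt_le_sqrt (by nlinarith)
      _ = γ := Real.sqrt_sq hγ.le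
  have hs_lb : γ/2 ≤ Real.sqrt (γ^2 - (α+β)^2/4 * r^2) := by
    have h := Real.sqrt_le_sqrt hu0
    rwa [Real.sqrt_sq (by positivity)] at h
  have hss : Real.sqrt (γ^2 - (α+β)^2/4 * r^2) * Real.sqrt (γ^2 - (α+β)^2/4 * r^2) = γ^2 - (α+β)^2/4 * r^2 := Real.mul_self_sqrt hu0'
  have hm_lb : γ/2 * r ≤ lamI α β γ r := by
    rw [lamI]; nlinarith
  have hm_ub : lamI α β γ r ≤ γ * r := by
    rw [lamI]; nlinarith
  have hm0 : 0 < lamI α β γ r := lt_of_lt_of_le (by positivity) hm_lb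
  have hD : γ*r - lamI α β γ r ≤ (α+β)^2/(4*γ) * r^3 := by
    have h1 : γ^2 - (α+β)^2/4 * r^2 ≤ γ * Real.sqrt (γ^2 - (α+β)^2/4 * r^2) := by nlinarith [Real.sqrt_nonneg (γ^2 - (α+β)^2/4 * r^2)]
    have h2 : γ - Real.sqrt (γ^2 - (α+β)^2/4 * r^2) ≤ (α+β)^2/(4*γ) * r^2 := by
      rw [show (α+β)^2/(4*γ)*r^2 = ((α+β)^2/4*r^2)/γ by ring, le_div_iff₀ hγ]
      nlinarith [h1]
    calc γ*r - lamI α β γ r = r * (γ - Real.sqrt (γ^2 - (α+β)^2/4 * r^2)) := by rw [lamI]; ring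
      _ ≤ r * ((α+β)^2/(4*γ)*r^2) := mul_le_mul_of_nonneg_left h2 hr0.le
      _ = (α+β)^2/(4*γ) * r^3 := by ring
  have hdiff_cos : |Real.cos (lamI α β γ r * t) - Real.cos (γ*r*t)|
      ≤ (α+β)^2/(4*γ) * r^3 * t := by
    calc |Real.cos (lamI α β γ r * t) - Real.cos (γ*r*t)|
        ≤ |lamI α β γ r * t - γ*r*t| := cos_lip' _ _
      _ = (γ*r - lamI α β γ r)*t := by
          rw [show lamI α β γ r * t - γ*r*t = -((γ*r - lamI α β γ r)*t) by ring, abs_neg,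
            abs_of_nonneg (by nlinarith)]
      _ ≤ (α+β)^2/(4*γ) * r^3 * t := mul_le_mul_of_nonneg_right hD htpos
  have hdiff_sin : |Real.sin (lamI α β γ r * t) - Real.sin (γ*r*t)|
      ≤ (α+β)^2/(4*γ) * r^3 * t := by
    calc |Real.sin (lamI α β γ r * t) - Real.sin (γ*r*t)|
        ≤ |lamI α β γ r * t - γ*r*t| := sin_lip' _ _
      _ = (γ*r - lamI α β γ r)*t := by
          rw [show lamI α β γ r * t - γ*r*t = -((γ*r - lamI α β γ r)*t) by ring, abs_neg,
            abs_of_nonneg (by nlinarith)]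
      _ ≤ (α+β)^2/(4*γ) * r^3 * t := mul_le_mul_of_nonneg_right hD htpos
  set E := Real.exp (-((α+β)/2 * r^2 * t)) with hE
  set X := Real.exp (-((α+β)/4 * r^2 * t)) with hX
  clear_value E X
  have hE0 : 0 < E := by rw [hE]; exact Real.exp_pos _
  have hX0 : 0 < X := by rw [hX]; exact Real.exp_pos _
  have hEX : E ≤ X := by
    rw [hE, hX]
    exact Real.exp_le_exp.mpr (by nlinarith [mul_nonneg (sq_nonneg r) htpos])
  have hEs : E * (r^2*t) ≤ 4/(α+β) * X := by
    have h1 : (α+β)/4*r^2*t ≤ Real.exp ((α+β)/4*r^2*t) :=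
      (by linarith [Real.add_one_le_exp ((α+β)/4*r^2*t)])
    have h2 : (r^2*t) * Real.exp (-((α+β)/4 * r^2 * t)) ≤ 4/(α+β) := by
      have h3 := Real.exp_pos (-((α+β)/4 * r^2 * t))
      have h4 : Real.exp ((α+β)/4*r^2*t) * Real.exp (-((α+β)/4 * r^2 * t)) = 1 := by
        rw [← Real.exp_add, show (α+β)/4*r^2*t + -((α+β)/4 * r^2 * t) = 0 by ring,
          Real.exp_zero]
      have h5 := mul_le_mul_of_nonneg_right h1 h3.le
      have h6 : (α+β)/4*r^2*t * Real.exp (-((α+β)/4 * r^2 * t)) ≤ 1 := by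
        calc (α+β)/4*r^2*t * Real.exp (-((α+β)/4 * r^2 * t))
            ≤ Real.exp ((α+β)/4*r^2*t) * Real.exp (-((α+β)/4 * r^2 * t)) := h5
          _ = 1 := h4
      rw [show (r^2*t) * Real.exp (-((α+β)/4 * r^2 * t))
          = (4*(α+β)⁻¹) * ((α+β)/4*r^2*t * Real.exp (-((α+β)/4 * r^2 * t))) by
        field_simp]
      calc (4*(α+β)⁻¹) * ((α+β)/4*r^2*t * Real.exp (-((α+β)/4 * r^2 * t)))
          ≤ (4*(α+β)⁻¹) * 1 := by
            apply mul_le_mul_of_nonneg_left h6 (by positivity)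
        _ = 4 / (α+β) := by rw [mul_one, ← div_eq_mul_inv]
    have hsplit : E = X * Real.exp (-((α+β)/4 * r^2 * t)) := by
      rw [hE, hX, ← Real.exp_add]; ring_nf
    calc E*(r^2*t) = X * ((r^2*t) * Real.exp (-((α+β)/4 * r^2 * t))) := by
          rw [hsplit]; ring
      _ ≤ X * (4/(α+β)) := mul_le_mul_of_nonneg_left h2 hX0.le
      _ = 4/(α+β) * X := by ring
  have hs1 : |Real.sin (lamI α β γ r * t)| ≤ 1 := Real.abs_sin_le_one _
  have hRm : |(-((α+β)/2*r^2))/(lamI α β γ r)| ≤ (α+β)/γ * r := by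
    rw [abs_div, abs_neg, abs_of_nonneg (by positivity), abs_of_pos hm0, div_le_iff₀ hm0]
    have key : ((α+β)/γ*r)*(γ/2*r) = (α+β)/2*r^2 := by field_simp
    linarith [mul_le_mul_of_nonneg_left hm_lb (show (0:ℝ) ≤ (α+β)/γ*r by positivity), key]
  constructor
  · have e1 : |E * ((Real.cos (lamI α β γ r * t) - Real.cos (γ*r*t))
        - (-((α+β)/2*r^2)/(lamI α β γ r)) * Real.sin (lamI α β γ r * t))|
        ≤ E*|Real.cos (lamI α β γ r * t) - Real.cos (γ*r*t)|
          + E*(|(-((α+β)/2*r^2))/(lamI α β γ r)| * |Real.sin (lamI α β γ r * t)|) := by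
      rw [show E*((Real.cos (lamI α β γ r * t) - Real.cos (γ*r*t))
          - (-((α+β)/2*r^2)/(lamI α β γ r)) * Real.sin (lamI α β γ r * t))
        = E*(Real.cos (lamI α β γ r * t) - Real.cos (γ*r*t))
          - E*((-((α+β)/2*r^2)/(lamI α β γ r)) * Real.sin (lamI α β γ r * t)) by ring]
      refine (habs_sub _ _).trans ?_
      rw [abs_mul, abs_mul, abs_mul, abs_of_pos hE0]
    refine e1.trans ?_
    have t1 : E*|Real.cos (lamI α β γ r * t) - Real.cos (γ*r*t)| ≤ ((α+β)/γ) * r * X := by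
      calc E*|Real.cos (lamI α β γ r * t) - Real.cos (γ*r*t)|
          ≤ E*((α+β)^2/(4*γ) * r^3 * t) := mul_le_mul_of_nonneg_left hdiff_cos hE0.le
        _ = (α+β)^2/(4*γ) * r * (E * (r^2*t)) := by ring
        _ ≤ (α+β)^2/(4*γ) * r * (4/(α+β) * X) := by
            apply mul_le_mul_of_nonneg_left hEs (by positivity)
        _ = ((α+β)/γ) * r * X := by field_simp
    have t2 : E*(|(-((α+β)/2*r^2))/(lamI α β γ r)| * |Real.sin (lamI α β γ r * t)|)
        ≤ ((α+β)/γ) * r * X := by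
      calc E*(|(-((α+β)/2*r^2))/(lamI α β γ r)| * |Real.sin (lamI α β γ r * t)|)
          ≤ E*(((α+β)/γ * r) * 1) := by
            apply mul_le_mul_of_nonneg_left _ hE0.le
            exact mul_le_mul hRm hs1 (abs_nonneg _) (by positivity)
        _ = ((α+β)/γ * r) * E := by ring
        _ ≤ ((α+β)/γ * r) * X := mul_le_mul_of_nonneg_left hEX (by positivity)
        _ = ((α+β)/γ) * r * X := by ring
    linarith
  · have hinv : |1/(lamI α β γ r) - 1/(γ*r)| ≤ (α+β)^2/(2*γ^3) * r := by
      have heq : 1/(lamI α β γ r) - 1/(γ*r) = (γ*r - lamI α β γ r)/(lamI α β γ r * (γ*r)) := by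
        field_simp
      rw [heq, abs_div, abs_of_nonneg (by nlinarith), abs_of_pos
        (mul_pos hm0 (mul_pos hγ hr0)), div_le_iff₀ (mul_pos hm0 (mul_pos hγ hr0))]
      have step : (α+β)^2/(2*γ^3)*r*((γ/2*r)*(γ*r)) = (α+β)^2/(4*γ)*r^3 := by
        field_simp; ring
      have mono : (α+β)^2/(2*γ^3)*r*((γ/2*r)*(γ*r))
          ≤ (α+β)^2/(2*γ^3)*r*(lamI α β γ r*(γ*r)) := by
        apply mul_le_mul_of_nonneg_left
          (mul_le_mul_of_nonneg_right hm_lb (by positivity)) (by positivity)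
      linarith [hD, step, mono]
    have hdec : Real.sin (lamI α β γ r * t)/(lamI α β γ r) - Real.sin (γ*r*t)/(γ*r)
        = Real.sin (lamI α β γ r * t)*(1/(lamI α β γ r) - 1/(γ*r))
          + (Real.sin (lamI α β γ r * t) - Real.sin (γ*r*t))*(1/(γ*r)) := by
      field_simp
      ring
    rw [abs_mul, abs_mul, abs_of_pos hE0, abs_of_pos hγ, hdec]
    have e2 : |Real.sin (lamI α β γ r * t)*(1/(lamI α β γ r) - 1/(γ*r))
          + (Real.sin (lamI α β γ r * t) - Real.sin (γ*r*t))*(1/(γ*r))|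
        ≤ (α+β)^2/(2*γ^3) * r + ((α+β)^2/(4*γ) * r^3 * t)*(1/(γ*r)) := by
      refine (abs_add_le _ _).trans ?_
      rw [abs_mul, abs_mul]
      have b1 : |Real.sin (lamI α β γ r * t)| * |1/(lamI α β γ r) - 1/(γ*r)|
          ≤ 1 * ((α+β)^2/(2*γ^3) * r) :=
        mul_le_mul hs1 hinv (abs_nonneg _) zero_le_one
      have b2 : |Real.sin (lamI α β γ r * t) - Real.sin (γ*r*t)| * |1/(γ*r)|
          ≤ ((α+β)^2/(4*γ) * r^3 * t) * (1/(γ*r)) := by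
        rw [abs_of_pos (by positivity : (0:ℝ) < 1/(γ*r))]
        exact mul_le_mul_of_nonneg_right hdiff_sin (by positivity)
      linarith
    calc E * γ * |Real.sin (lamI α β γ r * t)*(1/(lamI α β γ r) - 1/(γ*r))
          + (Real.sin (lamI α β γ r * t) - Real.sin (γ*r*t))*(1/(γ*r))|
        ≤ E * γ * ((α+β)^2/(2*γ^3) * r + ((α+β)^2/(4*γ) * r^3 * t)*(1/(γ*r))) :=
          mul_le_mul_of_nonneg_left e2 (mul_nonneg hE0.le hγ.le)
      _ = E * (γ * ((α+β)^2/(2*γ^3) * r + ((α+β)^2/(4*γ) * r^3 * t)*(1/(γ*r)))) := by ring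
      _ = (α+β)^2/(2*γ^2) * r * E + (α+β)^2/(4*γ) * (E * (r^2*t)) := by field_simp
      _ ≤ (α+β)^2/(2*γ^2) * 1 * X + (α+β)^2/(4*γ) * (4/(α+β) * X) := by
          have q1 : (α+β)^2/(2*γ^2) * r * E ≤ (α+β)^2/(2*γ^2) * 1 * X := by
            have h7 : r * E ≤ 1 * X := mul_le_mul hr1 hEX hE0.le zero_le_one
            have h8 := mul_le_mul_of_nonneg_left h7
              (show (0:ℝ) ≤ (α+β)^2/(2*γ^2) by positivity)
            linarith [h8]
          have q2 : (α+β)^2/(4*γ) * (E * (r^2*t)) ≤ (α+β)^2/(4*γ) * (4/(α+β) * X) :=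
            mul_le_mul_of_nonneg_left hEs (by positivity)
          linarith
      _ = ((α+β)^2/(2*γ^2) + (α+β)/γ) * X := by field_simp

set_option maxHeartbeats 1600000 in
/-- Small-frequency asymptotic expansion of the Fourier-space density:
`ρ̂ = e^{-((α+β)/2)|ξ|²t} a + Ĵ₀|ξ|a + Ĵ₁·(|ξ|b) + O(e^{-c|ξ|²t}|ξ|(|a|+|b|))`. -/
theorem density_small_frequency_expansion
    (α β γ : ℝ) (hα : 0 < α) (hβ : 0 ≤ β) (hγ : 0 < γ) {n : ℕ} :
    ∃ ε₀ c C : ℝ, 0 < ε₀ ∧ ε₀ < min 1 (2*γ/(α+β)) ∧ 0 < c ∧ 0 < C ∧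
      ∀ (a : ℂ) (b : EuclideanSpace ℂ (Fin n)),
      ∀ ξ : EuclideanSpace ℝ (Fin n), 0 < ‖ξ‖ → ‖ξ‖ ≤ ε₀ → ∀ t : ℝ, 1 ≤ t →
        ‖rhoHat α β γ a b ξ t - Complex.exp (Complex.ofReal (-((α+β)/2 * ‖ξ‖^2 * t))) * a
            - Complex.ofReal (J0hat α β γ t ‖ξ‖) * (‖ξ‖ : ℂ) * a
            - ∑ k, J1hat α β γ t ξ k * ((‖ξ‖ : ℂ) * b k)‖
          ≤ C * Real.exp (-(c * ‖ξ‖^2 * t)) * ‖ξ‖ * (‖a‖ + ‖b‖) := by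
  have hK : 0 < α + β := by linarith
  refine ⟨min 1 (2*γ/(α+β))/2, (α+β)/4,
    2*((α+β)/γ) + ((α+β)^2/(2*γ^2) + (α+β)/γ) + 1, ?_, ?_, ?_, ?_, ?_⟩
  · have h : 0 < min 1 (2*γ/(α+β)) := lt_min one_pos (by positivity)
    linarith
  · have h : 0 < min 1 (2*γ/(α+β)) := lt_min one_pos (by positivity)
    linarith
  · positivity
  · positivity
  intro a b ξ hr0 hξe t ht
  have hr1 : ‖ξ‖ ≤ 1 := by
    have h := min_le_left 1 (2*γ/(α+β))
    linarith
  have hminpos : 0 < min 1 (2*γ/(α+β)) := lt_min one_pos (by positivity)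
  have hrK : ‖ξ‖ < 2*γ/(α+β) := by
    have h1 := min_le_right 1 (2*γ/(α+β))
    linarith
  have hKr : (α+β)*‖ξ‖ ≤ γ := by
    have h1 := min_le_right 1 (2*γ/(α+β))
    have h2 : ‖ξ‖ ≤ γ/(α+β) := by
      have e : (2*γ/(α+β))/2 = γ/(α+β) := by ring
      linarith
    calc (α+β)*‖ξ‖ ≤ (α+β)*(γ/(α+β)) := mul_le_mul_of_nonneg_left h2 hK.le
      _ = γ := by field_simp
  have hKr2 : ((α+β)*‖ξ‖)^2 ≤ γ^2 := by nlinarith [mul_pos hK hr0]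
  have hu0 : (γ/2)^2 ≤ γ^2 - (α+β)^2/4 * ‖ξ‖^2 := by nlinarith
  have hs_lb : γ/2 ≤ Real.sqrt (γ^2 - (α+β)^2/4 * ‖ξ‖^2) := by
    have h := Real.sqrt_le_sqrt hu0
    rwa [Real.sqrt_sq (by positivity)] at h
  have hm0 : 0 < lamI α β γ ‖ξ‖ := by
    rw [lamI]
    exact mul_pos hr0 (lt_of_lt_of_le (by positivity) hs_lb)
  have hrC : (‖ξ‖:ℂ) ≠ 0 := by exact_mod_cast hr0.ne'
  -- bound on the inner sum
  have hS : ‖∑ k, (ξ k : ℂ) * b k‖ ≤ ‖ξ‖ * ‖b‖ := by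
    set x : EuclideanSpace ℂ (Fin n) := (WithLp.equiv 2 (Fin n → ℂ)).symm (fun k => (ξ k : ℂ))
      with hxdef
    have hx : (inner ℂ x b : ℂ) = ∑ k, (ξ k : ℂ) * b k := by
      rw [PiLp.inner_apply]
      refine Finset.sum_congr rfl fun k _ => ?_
      simp [hxdef, RCLike.inner_apply, Complex.conj_ofReal, mul_comm]
    have hxnorm : ‖x‖ = ‖ξ‖ := by
      rw [EuclideanSpace.norm_eq, EuclideanSpace.norm_eq]
      congr 1
      refine Finset.sum_congr rfl fun k _ => ?_
      simp [hxdef]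
    calc ‖∑ k, (ξ k : ℂ) * b k‖ = ‖(inner ℂ x b : ℂ)‖ := by rw [hx]
      _ ≤ ‖x‖ * ‖b‖ := norm_inner_le_norm x b
      _ = ‖ξ‖ * ‖b‖ := by rw [hxnorm]
  -- rewrite the J1 sum
  have hsum : (∑ k, J1hat α β γ t ξ k * ((‖ξ‖ : ℂ) * b k))
      = (-Complex.I * Complex.ofReal (Real.exp (-((α+β)/2 * ‖ξ‖^2 * t))
            * Real.sin (γ*‖ξ‖*t) / ‖ξ‖)) * (∑ k, (ξ k : ℂ) * b k) := by
    rw [Finset.mul_sum]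
    refine Finset.sum_congr rfl fun k _ => ?_
    rw [J1hat]
    push_cast
    field_simp
  simp only [rhoHat]
  rw [hsum, key_identity α β γ ‖ξ‖ t hK hγ hr0 hrK hm0.ne' a (∑ k, (ξ k : ℂ) * b k)]
  obtain ⟨hb1, hb2⟩ := real_bounds α β γ ‖ξ‖ t hK hγ hr0 hr1 hKr ht
  have hXpos : (0:ℝ) < Real.exp (-((α+β)/4 * ‖ξ‖^2 * t)) := Real.exp_pos _
  calc ‖Complex.ofReal (Real.exp (-((α+β)/2 * ‖ξ‖^2 * t))
        * ((Real.cos (lamI α β γ ‖ξ‖ * t) - Real.cos (γ*‖ξ‖*t))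
            - (-((α+β)/2*‖ξ‖^2)/(lamI α β γ ‖ξ‖)) * Real.sin (lamI α β γ ‖ξ‖ * t))) * a
      - Complex.I * Complex.ofReal (Real.exp (-((α+β)/2 * ‖ξ‖^2 * t)) * γ
          * (Real.sin (lamI α β γ ‖ξ‖ * t)/(lamI α β γ ‖ξ‖) - Real.sin (γ*‖ξ‖*t)/(γ*‖ξ‖)))
        * (∑ k, (ξ k : ℂ) * b k)‖
      ≤ ‖Complex.ofReal (Real.exp (-((α+β)/2 * ‖ξ‖^2 * t))
        * ((Real.cos (lamI α β γ ‖ξ‖ * t) - Real.cos (γ*‖ξ‖*t))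
            - (-((α+β)/2*‖ξ‖^2)/(lamI α β γ ‖ξ‖)) * Real.sin (lamI α β γ ‖ξ‖ * t))) * a‖
        + ‖Complex.I * Complex.ofReal (Real.exp (-((α+β)/2 * ‖ξ‖^2 * t)) * γ
          * (Real.sin (lamI α β γ ‖ξ‖ * t)/(lamI α β γ ‖ξ‖) - Real.sin (γ*‖ξ‖*t)/(γ*‖ξ‖)))
        * (∑ k, (ξ k : ℂ) * b k)‖ := norm_sub_le _ _
    _ = |Real.exp (-((α+β)/2 * ‖ξ‖^2 * t))
        * ((Real.cos (lamI α β γ ‖ξ‖ * t) - Real.cos (γ*‖ξ‖*t))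
            - (-((α+β)/2*‖ξ‖^2)/(lamI α β γ ‖ξ‖)) * Real.sin (lamI α β γ ‖ξ‖ * t))| * ‖a‖
        + |Real.exp (-((α+β)/2 * ‖ξ‖^2 * t)) * γ
          * (Real.sin (lamI α β γ ‖ξ‖ * t)/(lamI α β γ ‖ξ‖) - Real.sin (γ*‖ξ‖*t)/(γ*‖ξ‖))|
          * ‖∑ k, (ξ k : ℂ) * b k‖ := by
        rw [norm_mul, norm_mul, norm_mul, Complex.norm_I, Complex.norm_real,
          Complex.norm_real, Real.norm_eq_abs, Real.norm_eq_abs, one_mul]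
    _ ≤ (2*((α+β)/γ) * ‖ξ‖ * Real.exp (-((α+β)/4 * ‖ξ‖^2 * t))) * ‖a‖
        + (((α+β)^2/(2*γ^2) + (α+β)/γ) * Real.exp (-((α+β)/4 * ‖ξ‖^2 * t)))
          * (‖ξ‖ * ‖b‖) := by
        refine add_le_add (mul_le_mul_of_nonneg_right hb1 (norm_nonneg a)) ?_
        exact mul_le_mul hb2 hS (norm_nonneg _) (by positivity)
    _ ≤ (2*((α+β)/γ) + ((α+β)^2/(2*γ^2) + (α+β)/γ) + 1)
          * Real.exp (-((α+β)/4 * ‖ξ‖^2 * t)) * ‖ξ‖ * (‖a‖ + ‖b‖) := by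
        have hca : 2*((α+β)/γ) ≤ 2*((α+β)/γ) + ((α+β)^2/(2*γ^2) + (α+β)/γ) + 1 := by
          have h := (show (0:ℝ) ≤ (α+β)^2/(2*γ^2) + (α+β)/γ by positivity)
          linarith
        have hcb : ((α+β)^2/(2*γ^2) + (α+β)/γ)
            ≤ 2*((α+β)/γ) + ((α+β)^2/(2*γ^2) + (α+β)/γ) + 1 := by
          have h := (show (0:ℝ) ≤ 2*((α+β)/γ) by positivity)
          linarith
        have k1 : (2*((α+β)/γ) * ‖ξ‖ * Real.exp (-((α+β)/4 * ‖ξ‖^2 * t))) * ‖a‖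
            ≤ (2*((α+β)/γ) + ((α+β)^2/(2*γ^2) + (α+β)/γ) + 1)
              * Real.exp (-((α+β)/4 * ‖ξ‖^2 * t)) * ‖ξ‖ * ‖a‖ := by
          have := mul_le_mul_of_nonneg_right hca
            (show (0:ℝ) ≤ ‖ξ‖ * Real.exp (-((α+β)/4 * ‖ξ‖^2 * t)) * ‖a‖ by positivity)
          calc (2*((α+β)/γ) * ‖ξ‖ * Real.exp (-((α+β)/4 * ‖ξ‖^2 * t))) * ‖a‖
              = 2*((α+β)/γ) * (‖ξ‖ * Real.exp (-((α+β)/4 * ‖ξ‖^2 * t)) * ‖a‖) := by ring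
            _ ≤ (2*((α+β)/γ) + ((α+β)^2/(2*γ^2) + (α+β)/γ) + 1)
                * (‖ξ‖ * Real.exp (-((α+β)/4 * ‖ξ‖^2 * t)) * ‖a‖) := this
            _ = (2*((α+β)/γ) + ((α+β)^2/(2*γ^2) + (α+β)/γ) + 1)
                * Real.exp (-((α+β)/4 * ‖ξ‖^2 * t)) * ‖ξ‖ * ‖a‖ := by ring
        have k2 : (((α+β)^2/(2*γ^2) + (α+β)/γ) * Real.exp (-((α+β)/4 * ‖ξ‖^2 * t)))
              * (‖ξ‖ * ‖b‖)
            ≤ (2*((α+β)/γ) + ((α+β)^2/(2*γ^2) + (α+β)/γ) + 1)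
              * Real.exp (-((α+β)/4 * ‖ξ‖^2 * t)) * ‖ξ‖ * ‖b‖ := by
          have := mul_le_mul_of_nonneg_right hcb
            (show (0:ℝ) ≤ Real.exp (-((α+β)/4 * ‖ξ‖^2 * t)) * (‖ξ‖ * ‖b‖) by positivity)
          calc (((α+β)^2/(2*γ^2) + (α+β)/γ) * Real.exp (-((α+β)/4 * ‖ξ‖^2 * t)))
                * (‖ξ‖ * ‖b‖)
              = ((α+β)^2/(2*γ^2) + (α+β)/γ)
                * (Real.exp (-((α+β)/4 * ‖ξ‖^2 * t)) * (‖ξ‖ * ‖b‖)) := by ring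
            _ ≤ (2*((α+β)/γ) + ((α+β)^2/(2*γ^2) + (α+β)/γ) + 1)
                * (Real.exp (-((α+β)/4 * ‖ξ‖^2 * t)) * (‖ξ‖ * ‖b‖)) := this
            _ = (2*((α+β)/γ) + ((α+β)^2/(2*γ^2) + (α+β)/γ) + 1)
                * Real.exp (-((α+β)/4 * ‖ξ‖^2 * t)) * ‖ξ‖ * ‖b‖ := by ring
        calc (2*((α+β)/γ) * ‖ξ‖ * Real.exp (-((α+β)/4 * ‖ξ‖^2 * t))) * ‖a‖
              + (((α+β)^2/(2*γ^2) + (α+β)/γ) * Real.exp (-((α+β)/4 * ‖ξ‖^2 * t)))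
                * (‖ξ‖ * ‖b‖)
            ≤ (2*((α+β)/γ) + ((α+β)^2/(2*γ^2) + (α+β)/γ) + 1)
                * Real.exp (-((α+β)/4 * ‖ξ‖^2 * t)) * ‖ξ‖ * ‖a‖
              + (2*((α+β)/γ) + ((α+β)^2/(2*γ^2) + (α+β)/γ) + 1)
                * Real.exp (-((α+β)/4 * ‖ξ‖^2 * t)) * ‖ξ‖ * ‖b‖ := add_le_add k1 k2
          _ = (2*((α+β)/γ) + ((α+β)^2/(2*γ^2) + (α+β)/γ) + 1)
              * Real.exp (-((α+β)/4 * ‖ξ‖^2 * t)) * ‖ξ‖ * (‖a‖ + ‖b‖) := by ring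


end
end

section
/- Let n ≥ 1, γ > 0 and δ > 0. Then lim_{t→∞} t^{n/2} ∫₀^∞ sin²(γrt) r^{n−1} e^{−δr²t} dr = (1/2)∫₀^∞ s^{n−1} e^{−δs²} ds, and lim_{t→∞} t^{n/2} ∫₀^∞ cos²(γrt) r^{n−1} e^{−δr²t} dr = (1/2)∫₀^∞ s^{n−1} e^{−δs²} ds. In particular, there exist c > 0 and T ≥ 1 such that each of these integrals is at least c·t^{−n/2} for all t ≥ T. -/
open MeasureTheory Filter
open scoped ENNReal Topology

noncomputable section

open Set
open scoped FourierTransform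

-- Riemann-Lebesgue for real cosine
lemma rl_cos (h : ℝ → ℝ) (hh : Integrable h) :
    Tendsto (fun u : ℝ => ∫ x : ℝ, Real.cos (u * x) * h x) atTop (𝓝 0) := by
  have hdiv : Tendsto (fun u : ℝ => u / (2 * Real.pi)) atTop atTop :=
    Tendsto.atTop_div_const (by positivity) tendsto_id
  have h1 : Tendsto (fun u : ℝ => 𝓕 (fun x => (h x : ℂ)) (u / (2 * Real.pi))) atTop (𝓝 0) :=
    (Real.zero_at_infty_fourier _).comp (hdiv.mono_right atTop_le_cocompact)
  have h2 : Tendsto (fun u : ℝ => (𝓕 (fun x => (h x : ℂ)) (u / (2 * Real.pi))).re)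
      atTop (𝓝 0) := by
    simpa [Function.comp_def] using (Complex.continuous_re.tendsto 0).comp h1
  refine h2.congr fun u => ?_
  rw [Real.fourier_real_eq_integral_exp_smul]
  have hint : Integrable (fun v : ℝ =>
      Complex.exp (↑(-2 * Real.pi * v * (u / (2 * Real.pi))) * Complex.I) * (h v : ℂ)) := by
    refine Integrable.bdd_mul (c := 1) hh.ofReal ?_ (Filter.Eventually.of_forall fun x => ?_)
    · exact (Complex.continuous_exp.comp
        (by continuity : Continuous fun v : ℝ =>
          (↑(-2 * Real.pi * v * (u / (2 * Real.pi))) * Complex.I))).aestronglyMeasurable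
    · have hre : ((↑(-2 * Real.pi * x * (u / (2 * Real.pi))) : ℂ) * Complex.I).re = 0 := by
        rw [Complex.re_ofReal_mul, Complex.I_re, mul_zero]
      rw [Complex.norm_exp, hre, Real.exp_zero]
  have := integral_re (𝕜 := ℂ) hint
  simp only [RCLike.re_to_complex] at this
  simp only [smul_eq_mul]
  rw [← this]
  refine integral_congr_ae (Filter.Eventually.of_forall fun v => ?_)
  show (Complex.exp (↑(-2 * Real.pi * v * (u / (2 * Real.pi))) * Complex.I) * ↑(h v)).re
    = Real.cos (u * v) * h v
  have harg : -2 * Real.pi * v * (u / (2 * Real.pi)) = -(u * v) := by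
    field_simp
  rw [harg]
  rw [Complex.mul_re, Complex.exp_ofReal_mul_I_re]
  simp [Real.cos_neg]

lemma sqrt_tendsto : Tendsto Real.sqrt atTop atTop := by
  refine (tendsto_rpow_atTop (by norm_num : (0:ℝ) < 1/2)).congr' ?_
  filter_upwards [eventually_ge_atTop (0:ℝ)] with x hx
  exact (Real.sqrt_eq_rpow x).symm


section Main

variable {n : ℕ} {γ δ : ℝ}

lemma hg_int (hδ : 0 < δ) :
    IntegrableOn (fun s : ℝ => s^(n-1) * Real.exp (-(δ*s^2))) (Set.Ioi 0) := by
  have := integrableOn_rpow_mul_exp_neg_mul_sq hδ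
    (s := ((n-1 : ℕ) : ℝ)) (lt_of_lt_of_le neg_one_lt_zero (Nat.cast_nonneg _))
  refine this.congr_fun (fun x _ => ?_) measurableSet_Ioi
  beta_reduce
  rw [Real.rpow_natCast]
  ring_nf

lemma psi_tendsto (hδ : 0 < δ) :
    Tendsto (fun u : ℝ => ∫ x in Set.Ioi (0:ℝ), Real.cos (u*x) * (x^(n-1) * Real.exp (-(δ*x^2))))
      atTop (𝓝 0) := by
  set g : ℝ → ℝ := fun s => s^(n-1) * Real.exp (-(δ*s^2)) with hgdef
  have hind : Integrable ((Set.Ioi (0:ℝ)).indicator g) :=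
    (hg_int hδ).integrable_indicator measurableSet_Ioi
  refine (rl_cos _ hind).congr fun u => ?_
  rw [← integral_indicator measurableSet_Ioi]
  congr 1
  ext x
  by_cases hx : x ∈ Set.Ioi (0:ℝ) <;> simp [Set.indicator_apply, hx, hgdef]

lemma osc_sin (hδ : 0 < δ) (hγ : 0 < γ) :
    Tendsto (fun u : ℝ => ∫ s in Set.Ioi (0:ℝ),
        Real.sin (γ*s*u)^2 * s^(n-1) * Real.exp (-(δ*s^2))) atTop
      (𝓝 ((1/2) * ∫ s in Set.Ioi (0:ℝ), s^(n-1) * Real.exp (-(δ*s^2)))) := by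
  set g : ℝ → ℝ := fun s => s^(n-1) * Real.exp (-(δ*s^2)) with hgdef
  have hgI := hg_int (n := n) hδ
  have h2γ : Tendsto (fun u : ℝ => 2*γ*u) atTop atTop :=
    Tendsto.const_mul_atTop (by positivity) tendsto_id
  have key : ∀ u : ℝ, (∫ s in Set.Ioi (0:ℝ), Real.sin (γ*s*u)^2 * s^(n-1) * Real.exp (-(δ*s^2)))
      = (1/2) * (∫ s in Set.Ioi (0:ℝ), g s)
        - (1/2) * ∫ x in Set.Ioi (0:ℝ), Real.cos ((2*γ*u)*x) * g x := by
    intro u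
    have hcont : Continuous (fun x : ℝ => Real.cos ((2*γ*u)*x) * g x) := by
      fun_prop
    have hcos : IntegrableOn (fun x : ℝ => Real.cos ((2*γ*u)*x) * g x) (Set.Ioi 0) := by
      refine Integrable.mono' hgI hcont.aestronglyMeasurable.restrict ?_
      filter_upwards [ae_restrict_mem measurableSet_Ioi] with x hx
      have hg0 : (0:ℝ) ≤ g x := by
        have : (0:ℝ) < x := hx
        positivity
      rw [Real.norm_eq_abs, abs_mul, abs_of_nonneg hg0]
      exact mul_le_of_le_one_left hg0 (Real.abs_cos_le_one _)
    have hpt : ∀ s : ℝ, Real.sin (γ*s*u)^2 * s^(n-1) * Real.exp (-(δ*s^2))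
        = (1/2) * g s - (1/2) * (Real.cos ((2*γ*u)*s) * g s) := by
      intro s
      rw [Real.sin_sq_eq_half_sub]
      have : 2*(γ*s*u) = (2*γ*u)*s := by ring
      rw [this, hgdef]
      ring
    simp_rw [hpt]
    rw [integral_sub (hgI.const_mul _) (hcos.const_mul _), integral_const_mul _ _,
      integral_const_mul _ _]
  simp_rw [key]
  have := tendsto_const_nhds (α := ℝ) (x := (1/2) * ∫ s in Set.Ioi (0:ℝ), g s)
    |>.sub ((((psi_tendsto (n := n) hδ).comp h2γ)).const_mul (1/2))
  simpa using this

lemma osc_cos (hδ : 0 < δ) (hγ : 0 < γ) :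
    Tendsto (fun u : ℝ => ∫ s in Set.Ioi (0:ℝ),
        Real.cos (γ*s*u)^2 * s^(n-1) * Real.exp (-(δ*s^2))) atTop
      (𝓝 ((1/2) * ∫ s in Set.Ioi (0:ℝ), s^(n-1) * Real.exp (-(δ*s^2)))) := by
  set g : ℝ → ℝ := fun s => s^(n-1) * Real.exp (-(δ*s^2)) with hgdef
  have hgI := hg_int (n := n) hδ
  have h2γ : Tendsto (fun u : ℝ => 2*γ*u) atTop atTop :=
    Tendsto.const_mul_atTop (by positivity) tendsto_id
  have key : ∀ u : ℝ, (∫ s in Set.Ioi (0:ℝ), Real.cos (γ*s*u)^2 * s^(n-1) * Real.exp (-(δ*s^2)))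
      = (1/2) * (∫ s in Set.Ioi (0:ℝ), g s)
        + (1/2) * ∫ x in Set.Ioi (0:ℝ), Real.cos ((2*γ*u)*x) * g x := by
    intro u
    have hcont : Continuous (fun x : ℝ => Real.cos ((2*γ*u)*x) * g x) := by
      fun_prop
    have hcos : IntegrableOn (fun x : ℝ => Real.cos ((2*γ*u)*x) * g x) (Set.Ioi 0) := by
      refine Integrable.mono' hgI hcont.aestronglyMeasurable.restrict ?_
      filter_upwards [ae_restrict_mem measurableSet_Ioi] with x hx
      have hg0 : (0:ℝ) ≤ g x := by
        have : (0:ℝ) < x := hx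
        positivity
      rw [Real.norm_eq_abs, abs_mul, abs_of_nonneg hg0]
      exact mul_le_of_le_one_left hg0 (Real.abs_cos_le_one _)
    have hpt : ∀ s : ℝ, Real.cos (γ*s*u)^2 * s^(n-1) * Real.exp (-(δ*s^2))
        = (1/2) * g s + (1/2) * (Real.cos ((2*γ*u)*s) * g s) := by
      intro s
      rw [Real.cos_sq]
      have : 2*(γ*s*u) = (2*γ*u)*s := by ring
      rw [this, hgdef]
      ring
    simp_rw [hpt]
    rw [integral_add (hgI.const_mul _) (hcos.const_mul _), integral_const_mul _ _,
      integral_const_mul _ _]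
  simp_rw [key]
  have := tendsto_const_nhds (α := ℝ) (x := (1/2) * ∫ s in Set.Ioi (0:ℝ), g s)
    |>.add ((((psi_tendsto (n := n) hδ).comp h2γ)).const_mul (1/2))
  simpa using this

lemma scale_eq (hn : 1 ≤ n) (φ : ℝ → ℝ) {t : ℝ} (ht : 0 < t) :
    t^((n:ℝ)/2) * ∫ r in Set.Ioi (0:ℝ), φ (γ*r*t) * r^(n-1) * Real.exp (-(δ*r^2*t))
      = ∫ s in Set.Ioi (0:ℝ), φ (γ*s*Real.sqrt t) * s^(n-1) * Real.exp (-(δ*s^2)) := by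
  set c := Real.sqrt t with hc
  have hc0 : 0 < c := Real.sqrt_pos.mpr ht
  have hcc : c*c = t := Real.mul_self_sqrt ht.le
  have key := integral_comp_mul_right_Ioi
    (fun s => φ (γ*s*c) * s^(n-1) * Real.exp (-(δ*s^2))) 0 hc0
  have l1 : ∀ r : ℝ, φ (γ*(r*c)*c) * (r*c)^(n-1) * Real.exp (-(δ*(r*c)^2))
      = c^(n-1) * (φ (γ*r*t) * r^(n-1) * Real.exp (-(δ*r^2*t))) := by
    intro r
    rw [show γ*(r*c)*c = γ*r*t by rw [← hcc]; ring,
      show δ*(r*c)^2 = δ*r^2*t by rw [← hcc]; ring, mul_pow]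
    ring
  simp_rw [l1, zero_mul, smul_eq_mul] at key
  rw [integral_const_mul _ _] at key
  have hpow : c^n = c^(n-1) * c := by
    rw [← pow_succ, Nat.sub_add_cancel hn]
  have ht2 : t ^ ((n:ℝ)/2) = c^n := by
    rw [hc, Real.sqrt_eq_rpow, ← Real.rpow_natCast (t ^ ((1:ℝ)/2)) n,
      ← Real.rpow_mul ht.le]
    ring_nf
  rw [ht2]
  calc c^n * ∫ r in Set.Ioi (0:ℝ), φ (γ*r*t) * r^(n-1) * Real.exp (-(δ*r^2*t))
      = c * (c^(n-1) * ∫ r in Set.Ioi (0:ℝ), φ (γ*r*t) * r^(n-1) * Real.exp (-(δ*r^2*t))) := by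
        rw [hpow]; ring
    _ = c * (c⁻¹ * ∫ s in Set.Ioi (0:ℝ), φ (γ*s*c) * s^(n-1) * Real.exp (-(δ*s^2))) := by
        rw [key]
    _ = _ := by
        rw [← mul_assoc, mul_inv_cancel₀ hc0.ne', one_mul]

end Main


/-- Large-time asymptotics of the oscillatory Gaussian radial integrals:
`t^{n/2} ∫₀^∞ sin²(γrt) rⁿ⁻¹ e^{-δr²t} dr → (1/2)∫₀^∞ sⁿ⁻¹ e^{-δs²} ds`, likewise for `cos²`,
and in particular both integrals are bounded below by `c t^{-n/2}` for large times. -/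
theorem radial_oscillatory_integral_asymptotics
    {n : ℕ} (hn : 1 ≤ n) (γ δ : ℝ) (hγ : 0 < γ) (hδ : 0 < δ) :
    Filter.Tendsto (fun t : ℝ => t ^ ((n:ℝ)/2) * ∫ r in Set.Ioi (0:ℝ),
        Real.sin (γ*r*t)^2 * r^(n-1) * Real.exp (-(δ*r^2*t)))
      Filter.atTop (nhds ((1/2) * ∫ s in Set.Ioi (0:ℝ), s^(n-1) * Real.exp (-(δ*s^2))))
    ∧ Filter.Tendsto (fun t : ℝ => t ^ ((n:ℝ)/2) * ∫ r in Set.Ioi (0:ℝ),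
        Real.cos (γ*r*t)^2 * r^(n-1) * Real.exp (-(δ*r^2*t)))
      Filter.atTop (nhds ((1/2) * ∫ s in Set.Ioi (0:ℝ), s^(n-1) * Real.exp (-(δ*s^2))))
    ∧ ∃ c T : ℝ, 0 < c ∧ 1 ≤ T ∧ ∀ t, T ≤ t →
        c * t ^ (-(n:ℝ)/2) ≤ (∫ r in Set.Ioi (0:ℝ),
            Real.sin (γ*r*t)^2 * r^(n-1) * Real.exp (-(δ*r^2*t)))
        ∧ c * t ^ (-(n:ℝ)/2) ≤ (∫ r in Set.Ioi (0:ℝ),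
            Real.cos (γ*r*t)^2 * r^(n-1) * Real.exp (-(δ*r^2*t))) := by
  set I : ℝ := ∫ s in Set.Ioi (0:ℝ), s^(n-1) * Real.exp (-(δ*s^2)) with hI
  have hsin : Filter.Tendsto (fun t : ℝ => t ^ ((n:ℝ)/2) * ∫ r in Set.Ioi (0:ℝ),
      Real.sin (γ*r*t)^2 * r^(n-1) * Real.exp (-(δ*r^2*t))) Filter.atTop (𝓝 ((1/2) * I)) := by
    refine Filter.Tendsto.congr' ?_ ((osc_sin hδ hγ).comp sqrt_tendsto)
    filter_upwards [eventually_gt_atTop (0:ℝ)] with t ht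
    exact (scale_eq hn (fun x => Real.sin x ^ 2) ht).symm
  have hcos : Filter.Tendsto (fun t : ℝ => t ^ ((n:ℝ)/2) * ∫ r in Set.Ioi (0:ℝ),
      Real.cos (γ*r*t)^2 * r^(n-1) * Real.exp (-(δ*r^2*t))) Filter.atTop (𝓝 ((1/2) * I)) := by
    refine Filter.Tendsto.congr' ?_ ((osc_cos hδ hγ).comp sqrt_tendsto)
    filter_upwards [eventually_gt_atTop (0:ℝ)] with t ht
    exact (scale_eq hn (fun x => Real.cos x ^ 2) ht).symm
  have hIpos : 0 < I := by
    rw [hI, setIntegral_pos_iff_support_of_nonneg_ae ?_ (hg_int hδ)]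
    · have hsub : Set.Ioi (0:ℝ) ⊆ Function.support (fun s : ℝ => s^(n-1) * Real.exp (-(δ*s^2))) := by
        intro s hs
        have : (0:ℝ) < s := hs
        exact (by positivity : (0:ℝ) < s^(n-1) * Real.exp (-(δ*s^2))).ne'
      rw [Set.inter_eq_right.mpr hsub]
      simp [Real.volume_Ioi]
    · filter_upwards [ae_restrict_mem measurableSet_Ioi] with s hs
      have : (0:ℝ) < s := hs
      positivity
  have hL : 0 < (1/2) * I := by positivity
  refine ⟨hsin, hcos, ?_⟩
  have e1 := hsin.eventually_const_le (half_lt_self hL)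
  have e2 := hcos.eventually_const_le (half_lt_self hL)
  obtain ⟨T, hT⟩ := (e1.and (e2.and (eventually_ge_atTop (1:ℝ)))).exists_forall_of_atTop
  refine ⟨(1/2)*I/2, max T 1, by positivity, le_max_right _ _, fun t ht => ?_⟩
  obtain ⟨hs, hc, ht1⟩ := hT t (le_trans (le_max_left _ _) ht)
  have ht0 : (0:ℝ) < t := lt_of_lt_of_le one_pos ht1
  have hpow : (0:ℝ) < t ^ ((n:ℝ)/2) := Real.rpow_pos_of_pos ht0 _
  have hneg : t ^ (-(n:ℝ)/2) = (t ^ ((n:ℝ)/2))⁻¹ := by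
    rw [neg_div, Real.rpow_neg ht0.le]
  constructor
  · rw [hneg, ← div_eq_mul_inv, div_le_iff₀ hpow]
    linarith [hs]
  · rw [hneg, ← div_eq_mul_inv, div_le_iff₀ hpow]
    linarith [hc]


end
end
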